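/- arXiv:1810.01810 — 2 statements merged into one kernel-verified Lean document; each statement's English description precedes it below -/
import Mathlib

section
/- Let λ be an infinite limit ordinal and α := ω^λ. Every composition ∘ on 𝕃_{<α} that admits Taylor expansion obeys the Chain Rule: (f∘g)' = (f'∘g)·g' for all f ∈ 𝕃_{<α} and g ∈ 𝕃_{<α}^{>ℝ}. -/
noncomputable section

open Classical

namespace LogHyp

universe u v w

/-- A subset of a totally ordered set is *well-based* if it contains no infinite
strictly increasing sequence. -/
def WellBased {M : Type u} [Preorder M] (S : Set M) : Prop :=
  ¬ ∃ f : ℕ → M, StrictMono f ∧ ∀ n, f n ∈ S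

theorem wellBased_isPWO {M : Type u} [LinearOrder M] {S : Set Mᵒᵈ}
    (h : WellBased (OrderDual.toDual ⁻¹' S)) : S.IsPWO := by
  rw [Set.isPWO_iff_isWF, Set.isWF_iff_no_descending_seq]
  intro f hf hmem
  exact h ⟨fun n => OrderDual.ofDual (f n), fun a b hab => hf hab, hmem⟩

/-- A family in a field of well-based series (series with monomials in `Mᵒᵈ`,
so that supports are well-based as subsets of `M`) is summable if the union of
the supports is well-based and each monomial lies in the support of only
finitely many members. -/
def IsSummable {M : Type u} [LinearOrder M] {R : Type v} [Zero R] {ι : Type w}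
    (f : ι → HahnSeries Mᵒᵈ R) : Prop :=
  WellBased (OrderDual.toDual ⁻¹' (⋃ i, (f i).support)) ∧
    ∀ g : Mᵒᵈ, {i | (f i).coeff g ≠ 0}.Finite

/-- The sum of a summable family (junk value `0` if the family is not summable). -/
noncomputable def famSum {M : Type u} [LinearOrder M] {R : Type v} [AddCommMonoid R] {ι : Type w}
    (f : ι → HahnSeries Mᵒᵈ R) : HahnSeries Mᵒᵈ R :=
  if h : IsSummable f then
    (⟨f, wellBased_isPWO h.1, h.2⟩ : HahnSeries.SummableFamily Mᵒᵈ R ι).hsum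
  else 0

/-- Strongly `k`-linear maps between fields of well-based series:
`k`-linear maps sending summable families to summable families, preserving sums. -/
def IsStronglyLinear {k : Type v} [Semiring k] {M : Type u} {N : Type w}
    [LinearOrder M] [LinearOrder N]
    (Φ : HahnSeries Mᵒᵈ k → HahnSeries Nᵒᵈ k) : Prop :=
  (∀ (c : k) (f : HahnSeries Mᵒᵈ k), Φ (c • f) = c • Φ f) ∧
  (∀ f g, Φ (f + g) = Φ f + Φ g) ∧
  ∀ {ι : Type u} (f : ι → HahnSeries Mᵒᵈ k), IsSummable f →
    IsSummable (fun i => Φ (f i)) ∧ Φ (famSum f) = famSum fun i => Φ (f i)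

/-- `f ≺ g`: the dominant monomial of `f` is smaller than that of `g`
(with `𝔡 0` below all monomials). -/
def prec {M : Type u} [LinearOrder M] {R : Type v} [Zero R]
    (f g : HahnSeries Mᵒᵈ R) : Prop :=
  g ≠ 0 ∧ ∀ m ∈ f.support, ∃ n ∈ g.support,
    (OrderDual.ofDual m : M) < OrderDual.ofDual n

/-- `f ⪯ g`: the dominant monomial of `f` is at most that of `g`. -/
def preceq {M : Type u} [LinearOrder M] {R : Type v} [Zero R]
    (f g : HahnSeries Mᵒᵈ R) : Prop :=
  ∀ m ∈ f.support, ∃ n ∈ g.support, (OrderDual.ofDual m : M) ≤ OrderDual.ofDual n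

/-- The coefficient of the dominant (i.e. maximal) monomial of `f` (0 for `f = 0`). -/
noncomputable def leadCoeff {M : Type u} [LinearOrder M] {k : Type v} [Zero k]
    (f : HahnSeries Mᵒᵈ k) : k :=
  if hf : f = 0 then 0
  else f.coeff (f.isWF_support.min (HahnSeries.support_nonempty_iff.mpr hf))

/-- `f > 0` for real well-based series: the leading coefficient is positive. -/
def SPos {M : Type u} [LinearOrder M] (f : HahnSeries Mᵒᵈ ℝ) : Prop := 0 < leadCoeff f

/-- The ordering of real well-based series: `f < g` iff `g - f` has positive
leading coefficient. -/
def SLt {M : Type u} [LinearOrder M] (f g : HahnSeries Mᵒᵈ ℝ) : Prop := SPos (g - f)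

/-- `f > ℝ` : `f` exceeds every real constant. -/
def gtR {M : Type u} [AddCommGroup M] [LinearOrder M] [IsOrderedAddMonoid M] (f : HahnSeries Mᵒᵈ ℝ) : Prop :=
  ∀ r : ℝ, SLt (HahnSeries.C r) f

/-- `log(1+ε) = ∑_{n≥1} (-1)^{n-1} ε^n / n`, for `ε ≺ 1`. -/
noncomputable def log1p {M : Type u} [AddCommGroup M] [LinearOrder M] [IsOrderedAddMonoid M] {k : Type v} [Field k]
    (ε : HahnSeries Mᵒᵈ k) : HahnSeries Mᵒᵈ k :=
  famSum fun n : ℕ => ((-1 : k) ^ n / ((n : k) + 1)) • ε ^ (n + 1)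

/-- `exp(ε) = ∑_{n≥0} ε^n / n!`, for `ε ≺ 1`. -/
noncomputable def expS {M : Type u} [AddCommGroup M] [LinearOrder M] [IsOrderedAddMonoid M] {k : Type v} [Field k]
    (f : HahnSeries Mᵒᵈ k) : HahnSeries Mᵒᵈ k :=
  famSum fun n : ℕ => ((n.factorial : k))⁻¹ • f ^ n

/-- The operator support of a linear operator: the smallest set `𝔖` of monomials with
`supp S(m) ⊆ 𝔖·m` for all monomials `m`. -/
def opSupport {M : Type u} [AddCommGroup M] [LinearOrder M] [IsOrderedAddMonoid M] {k : Type v} [Zero k] [One k]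
    (S : HahnSeries Mᵒᵈ k → HahnSeries Mᵒᵈ k) : Set Mᵒᵈ :=
  ⋃ m : Mᵒᵈ, (fun g => g - m) '' (S (HahnSeries.single m 1)).support



/-- The ordinals below `α`. -/
abbrev Idx (α : Ordinal.{0}) : Type 1 := {β : Ordinal.{0} // β < α}

/-- The monomial group `𝔏_{<α}`, written additively: a logarithmic hypermonomial
`ℓ^r = ∏_{β<α} ℓ_β^{r_β}` is identified with its exponent sequence `r`, and the
group is ordered lexicographically. -/
abbrev Mon (α : Ordinal.{0}) : Type 1 := Lex (Idx α → ℝ)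

/-- The field `𝕃_{<α} = ℝ[[𝔏_{<α}]]` of logarithmic hyperseries: well-based series
with real coefficients and monomials in `𝔏_{<α}` (we use the order dual so that
supports are well-based, i.e. reverse well-ordered, subsets of `𝔏_{<α}`). -/
abbrev LSeries (α : Ordinal.{0}) : Type 1 := HahnSeries (Mon α)ᵒᵈ ℝ

/-- The monomial `ℓ^r` as an element of the (dualised) monomial group. -/
def monExp (α : Ordinal.{0}) (r : Idx α → ℝ) : (Mon α)ᵒᵈ := OrderDual.toDual (toLex r)

/-- The monomial `ℓ^r` as an element of `𝕃_{<α}`. -/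
noncomputable def monS (α : Ordinal.{0}) (r : Idx α → ℝ) : LSeries α :=
  HahnSeries.single (monExp α r) 1

/-- The exponent sequence of the hyperlogarithm `ℓ_β`. -/
def ellExp (α β : Ordinal.{0}) : Idx α → ℝ := fun ρ => if ρ.1 = β then 1 else 0

/-- The hyperlogarithm `ℓ_β` as an element of `𝕃_{<α}` (for `β < α`). -/
noncomputable def ell (α β : Ordinal.{0}) : LSeries α := monS α (ellExp α β)

/-- The exponent sequence of `ℓ_β' = ∏_{ρ<β} ℓ_ρ⁻¹`. -/
def derExp (α β : Ordinal.{0}) : Idx α → ℝ := fun ρ => if ρ.1 < β then -1 else 0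

/-- The exponent sequence of `ℓ_β† = ∏_{ρ≤β} ℓ_ρ⁻¹`. -/
def dagExp (α β : Ordinal.{0}) : Idx α → ℝ := fun ρ => if ρ.1 ≤ β then -1 else 0

/-- `D` is *the* derivation of `𝕃_{<α}`: a strongly `ℝ`-linear derivation
with `D ℓ_β = ∏_{ρ<β} ℓ_ρ⁻¹` for all `β < α`. -/
def IsDerL (α : Ordinal.{0}) (D : LSeries α → LSeries α) : Prop :=
  IsStronglyLinear D ∧ (∀ f g, D (f * g) = f * D g + g * D f) ∧
    ∀ β : Ordinal.{0}, β < α → D (ell α β) = monS α (derExp α β)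

/-- The exponent sequence of the dominant monomial of `f` (0 if `f = 0`). -/
noncomputable def domExp (α : Ordinal.{0}) (f : LSeries α) : Idx α → ℝ :=
  if hf : f = 0 then 0
  else ofLex (OrderDual.ofDual
    (f.isWF_support.min (HahnSeries.support_nonempty_iff.mpr hf)))

/-- The logarithm on `𝕃_{<α}^{>0}` (`α` a limit ordinal):
`log (c·ℓ^r·(1+ε)) = ∑_β r_β ℓ_{β+1} + log c + ∑_{n≥1} (-1)^{n-1} ε^n/n`. -/
noncomputable def logFn (α : Ordinal.{0}) (f : LSeries α) : LSeries α :=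
  (famSum fun β : Idx α => domExp α f β • ell α (β.1 + 1))
    + HahnSeries.C (Real.log (leadCoeff f))
    + log1p (f * (HahnSeries.single (monExp α (domExp α f)) (leadCoeff f))⁻¹ - 1)

/-- The logarithmicity `λ_f`: the least `β` with `r_β ≠ 0`, where `𝔡(f) = ℓ^r`. -/
noncomputable def lambdaOf (α : Ordinal.{0}) (f : LSeries α) : Ordinal.{0} :=
  sInf {β : Ordinal.{0} | ∃ h : β < α, domExp α f ⟨β, h⟩ ≠ 0}

/-- The coefficient of `ω^δ` in the Cantor normal form of `μ`. -/
noncomputable def cnfCoeff (μ δ : Ordinal.{0}) : ℕ :=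
  Cardinal.toNat (Ordinal.card ((μ / Ordinal.omega0 ^ δ) % Ordinal.omega0))

/-- `λ_{g;ν}`: writing `λ_g = ω^{β₁}n₁ + ⋯ + ω^{β_k}n_k` in Cantor normal form,
this is `n_i` if `ν = ω^{β_i+1}`, and `0` for every other ordinal `ν`. -/
noncomputable def lambdaCoeff (α : Ordinal.{0}) (g : LSeries α) (ν : Ordinal.{0}) : ℕ :=
  if h : ∃ δ : Ordinal.{0}, ν = Ordinal.omega0 ^ (δ + 1) then
    cnfCoeff (lambdaOf α g) h.choose
  else 0

/-- A composition on `𝕃_{<α}` (axioms (CL1)–(CL5)); `C f g` is `f ∘ g`,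
subject to conditions only when the right argument is `> ℝ`. -/
def IsCompositionOp (α : Ordinal.{0}) (C : LSeries α → LSeries α → LSeries α) : Prop :=
  -- (CL1): for each g > ℝ, `f ↦ f ∘ g` is an ℝ-algebra homomorphism
  (∀ g, gtR g →
    C 1 g = 1 ∧
    (∀ f₁ f₂, C (f₁ + f₂) g = C f₁ g + C f₂ g) ∧
    (∀ f₁ f₂, C (f₁ * f₂) g = C f₁ g * C f₂ g) ∧
    (∀ c : ℝ, C (HahnSeries.C c) g = HahnSeries.C c)) ∧
  -- (CL2)
  (∀ f, C f (ell α 0) = f) ∧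
  (∀ g, gtR g → C (ell α 0) g = g) ∧
  -- (CL3)
  (∀ f g, gtR g → SPos f → C (logFn α f) g = logFn α (C f g)) ∧
  -- (CL4)
  (∀ g, gtR g → ∀ {ι : Type 1} (F : ι → LSeries α), IsSummable F →
    IsSummable (fun i => C (F i) g) ∧ C (famSum F) g = famSum fun i => C (F i) g) ∧
  -- (CL5)
  (∀ f g h, gtR g → gtR h → C (C f g) h = C f (C g h))

/-- A composition admits Taylor expansion if for `g > ℝ` and `h ≺ g` the family
`(f⁽ⁿ⁾∘g)·hⁿ/n!` is summable with sum `f∘(g+h)`. -/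
def AdmitsTaylor (α : Ordinal.{0}) (D : LSeries α → LSeries α)
    (C : LSeries α → LSeries α → LSeries α) : Prop :=
  ∀ f g h, gtR g → prec h g →
    IsSummable (fun n : ℕ => ((n.factorial : ℝ))⁻¹ • (C (D^[n] f) g * h ^ n)) ∧
    C f (g + h) = famSum fun n : ℕ => ((n.factorial : ℝ))⁻¹ • (C (D^[n] f) g * h ^ n)

/-- The hyperlogarithm identities for a composition on `𝕃_{<ω^λ}`. -/
def HyperlogIds (lam : Ordinal.{0})
    (C : LSeries (Ordinal.omega0 ^ lam) → LSeries (Ordinal.omega0 ^ lam) →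
      LSeries (Ordinal.omega0 ^ lam)) : Prop :=
  (∀ β γ : Ordinal.{0}, β < lam → γ < Ordinal.omega0 ^ (β + 1) →
      C (ell (Ordinal.omega0 ^ lam) γ) (ell (Ordinal.omega0 ^ lam) (Ordinal.omega0 ^ β))
        = ell (Ordinal.omega0 ^ lam) (Ordinal.omega0 ^ β + γ)) ∧
  (∀ β : Ordinal.{0}, β < lam →
      C (ell (Ordinal.omega0 ^ lam) (Ordinal.omega0 ^ (β + 1)))
          (ell (Ordinal.omega0 ^ lam) (Ordinal.omega0 ^ β))
        = ell (Ordinal.omega0 ^ lam) (Ordinal.omega0 ^ (β + 1)) - 1) ∧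
  (∀ β γ : Ordinal.{0}, β < γ → γ < lam → Order.IsSuccLimit γ →
      (C (ell (Ordinal.omega0 ^ lam) (Ordinal.omega0 ^ γ))
          (ell (Ordinal.omega0 ^ lam) (Ordinal.omega0 ^ β))).coeff 0 = 0)



/-! ### Auxiliary toolkit -/

section Toolkit

universe uM w'

variable {M : Type uM} [LinearOrder M]

theorem wellBased_of_isPWO {S : Set Mᵒᵈ} (h : S.IsPWO) :
    WellBased (OrderDual.toDual ⁻¹' S) := by
  rw [Set.isPWO_iff_isWF, Set.isWF_iff_no_descending_seq] at h
  rintro ⟨f, hf, hmem⟩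
  exact h (fun n => OrderDual.toDual (f n)) (fun a b hab => hf hab) hmem

theorem WellBased.mono {S T : Set M} (h : WellBased T) (hsub : S ⊆ T) : WellBased S :=
  fun ⟨f, hf, hm⟩ => h ⟨f, hf, fun n => hsub (hm n)⟩

variable {R : Type v} {ι : Type w} {κ : Type w'}

theorem IsSummable.isPWO [Zero R] {f : ι → HahnSeries Mᵒᵈ R} (h : IsSummable f) :
    (⋃ i, (f i).support).IsPWO := wellBased_isPWO h.1

/-- The mathlib `SummableFamily` associated to a summable family. -/
def IsSummable.toFam [AddCommMonoid R] {f : ι → HahnSeries Mᵒᵈ R} (h : IsSummable f) :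
    HahnSeries.SummableFamily Mᵒᵈ R ι := ⟨f, wellBased_isPWO h.1, h.2⟩

theorem famSum_eq [AddCommMonoid R] {f : ι → HahnSeries Mᵒᵈ R} (h : IsSummable f) :
    famSum f = h.toFam.hsum := dif_pos h

theorem famSum_coeff [AddCommMonoid R] {f : ι → HahnSeries Mᵒᵈ R} (h : IsSummable f) (u : Mᵒᵈ) :
    (famSum f).coeff u = ∑ᶠ i, (f i).coeff u := by
  rw [famSum_eq h]
  exact HahnSeries.SummableFamily.coeff_hsum

theorem famSum_coeff_ne_zero [AddCommMonoid R] {f : ι → HahnSeries Mᵒᵈ R} {u : Mᵒᵈ}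
    (h : (famSum f).coeff u ≠ 0) : ∃ i, (f i).coeff u ≠ 0 := by
  by_cases hs : IsSummable f
  · rw [famSum_coeff hs] at h
    by_contra hc
    push_neg at hc
    exact h (finsum_eq_zero_of_forall_eq_zero hc)
  · rw [famSum, dif_neg hs] at h
    simp at h

theorem IsSummable.of_support_subset [Zero R] {f g : ι → HahnSeries Mᵒᵈ R}
    (h : IsSummable f) (hs : ∀ i, (g i).support ⊆ (f i).support) : IsSummable g := by
  constructor
  · exact h.1.mono (Set.preimage_mono (Set.iUnion_mono hs))
  · intro u
    refine (h.2 u).subset fun i hi => ?_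
    exact hs i hi

theorem IsSummable.smul [Zero R] [SMulZeroClass ℝ R] {f : ι → HahnSeries Mᵒᵈ R} (c : ι → ℝ)
    (h : IsSummable f) : IsSummable fun i => c i • f i :=
  h.of_support_subset fun i u hu => by
    simp only [HahnSeries.mem_support, HahnSeries.coeff_smul] at hu ⊢
    intro h0
    exact hu (by rw [h0, smul_zero])

theorem IsSummable.comp_injective [Zero R] {f : ι → HahnSeries Mᵒᵈ R} (h : IsSummable f)
    {e : κ → ι} (he : Function.Injective e) : IsSummable fun k => f (e k) := by
  constructor
  · exact h.1.mono (Set.preimage_mono (Set.iUnion_subset fun k =>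
      Set.subset_iUnion (fun i => (f i).support) (e k)))
  · intro u
    have : {k | (f (e k)).coeff u ≠ 0} ⊆ e ⁻¹' {i | (f i).coeff u ≠ 0} := fun k hk => hk
    exact ((h.2 u).preimage he.injOn).subset this

end Toolkit

section FinsumPoly

theorem finsum_nat_succ {β : Type*} [AddCommMonoid β] (a : ℕ → β)
    (ha : (Function.support a).Finite) : ∑ᶠ n, a n = a 0 + ∑ᶠ n, a (n + 1) := by
  obtain ⟨N, hN⟩ := ha.bddAbove
  have h1 : Function.support a ⊆ ↑(Finset.range (N + 1)) := by
    intro n hn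
    simp only [Finset.coe_range, Set.mem_Iio]
    exact Nat.lt_succ_of_le (hN hn)
  have h2 : Function.support (fun n => a (n + 1)) ⊆ ↑(Finset.range N) := by
    intro n hn
    simp only [Finset.coe_range, Set.mem_Iio]
    have := hN (hn : a (n + 1) ≠ 0)
    omega
  rw [finsum_eq_finset_sum_of_support_subset _ h1, finsum_eq_finset_sum_of_support_subset _ h2,
    Finset.sum_range_succ' a N, add_comm]

/-- The polynomial with coefficients a finitely supported function `ℕ → ℝ`. -/
noncomputable def FinPoly (a : ℕ → ℝ) (h : (Function.support a).Finite) : Polynomial ℝ :=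
  ∑ n ∈ h.toFinset, Polynomial.monomial n (a n)

theorem FinPoly_eval (a : ℕ → ℝ) (h : (Function.support a).Finite) (t : ℝ) :
    (FinPoly a h).eval t = ∑ᶠ n, a n * t ^ n := by
  have hsub : Function.support (fun n => a n * t ^ n) ⊆ ↑h.toFinset := by
    intro n hn
    simp only [Set.Finite.coe_toFinset, Function.mem_support]
    intro h0
    exact hn (by simp [Function.mem_support, h0])
  rw [finsum_eq_finset_sum_of_support_subset _ hsub, FinPoly, Polynomial.eval_finset_sum]
  simp [Polynomial.eval_monomial]

theorem FinPoly_coeff (a : ℕ → ℝ) (h : (Function.support a).Finite) (k : ℕ) :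
    (FinPoly a h).coeff k = a k := by
  rw [FinPoly, Polynomial.finset_sum_coeff]
  simp only [Polynomial.coeff_monomial]
  rw [Finset.sum_ite_eq' h.toFinset k a]
  split
  · rfl
  · next hk =>
    by_contra h0
    exact hk (h.mem_toFinset.2 (Ne.symm h0 : a k ≠ 0))

theorem polyRep_coeff {a : ℕ → ℝ} (h : (Function.support a).Finite) {p : Polynomial ℝ}
    (hp : ∀ t, p.eval t = ∑ᶠ n, a n * t ^ n) (k : ℕ) : p.coeff k = a k := by
  have : p = FinPoly a h := Polynomial.funext fun t => by rw [hp, FinPoly_eval]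
  rw [this, FinPoly_coeff]

/-- If a family of real polynomials has, at every point, only finitely many members with
nonzero value, then only finitely many members are nonzero. -/
theorem finite_ne_zero_of_pointwise {p : ℕ → Polynomial ℝ}
    (h : ∀ t : ℝ, {m | (p m).eval t ≠ 0}.Finite) : {m | p m ≠ 0}.Finite := by
  by_contra hinf
  replace hinf : Set.Infinite {m | p m ≠ 0} := hinf
  set e := hinf.natEmbedding with he
  have hcount : (⋃ n : ℕ, {t : ℝ | (p (e n).1).eval t = 0}).Countable :=
    Set.countable_iUnion fun n =>
      (Polynomial.finite_setOf_isRoot ((e n).2 : p (e n).1 ≠ 0)).countable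
  obtain ⟨t, ht⟩ : ∃ t : ℝ, t ∉ ⋃ n : ℕ, {t : ℝ | (p (e n).1).eval t = 0} := by
    by_contra h'
    push_neg at h'
    exact Cardinal.not_countable_real (hcount.mono fun t _ => h' t)
  have hmem : ∀ n : ℕ, (fun n : ℕ => (e n).1) n ∈ {m | (p m).eval t ≠ 0} := by
    intro n h0
    exact ht (Set.mem_iUnion.2 ⟨n, h0⟩)
  have hinj : Function.Injective fun n : ℕ => (e n).1 :=
    fun a b hab => e.injective (Subtype.coe_injective hab)
  exact Set.infinite_of_injective_forall_mem hinj hmem (h t)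

end FinsumPoly

section OrderFacts

universe uM

variable {M : Type uM} [AddCommGroup M] [LinearOrder M] [IsOrderedAddMonoid M]

theorem leadCoeff_eq_leadingCoeff {k : Type v} [Zero k] (f : HahnSeries Mᵒᵈ k) :
    leadCoeff f = f.leadingCoeff := by
  by_cases hf : f = 0
  · simp [leadCoeff, hf]
  · rw [leadCoeff, dif_neg hf, HahnSeries.leadingCoeff_eq, HahnSeries.order_of_ne hf]

theorem sPos_iff {f : HahnSeries Mᵒᵈ ℝ} : SPos f ↔ 0 < f.leadingCoeff := by
  rw [SPos, leadCoeff_eq_leadingCoeff]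

theorem SPos.ne_zero {f : HahnSeries Mᵒᵈ ℝ} (h : SPos f) : f ≠ 0 :=
  HahnSeries.leadingCoeff_ne_zero.1 (ne_of_gt (sPos_iff.1 h))

theorem order_eq_of_coeff {z : HahnSeries Mᵒᵈ ℝ} {u₀ : Mᵒᵈ} (h1 : z.coeff u₀ ≠ 0)
    (h2 : ∀ u, u < u₀ → z.coeff u = 0) : z.order = u₀ ∧ z.leadingCoeff = z.coeff u₀ := by
  have hz : z ≠ 0 := HahnSeries.ne_zero_of_coeff_ne_zero h1
  have hle : z.order ≤ u₀ := HahnSeries.order_le_of_coeff_ne_zero h1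
  have heq : z.order = u₀ := by
    rcases lt_or_eq_of_le hle with hlt | h
    · exact absurd (h2 _ hlt) (HahnSeries.coeff_order_eq_zero.not.2 hz)
    · exact h
  exact ⟨heq, by rw [HahnSeries.leadingCoeff_eq, heq]⟩

/-- All monomials in the support of `x` are infinitesimal (`≺ 1`), expressed in the
dual ordering. -/
def SuppPos (x : HahnSeries Mᵒᵈ ℝ) : Prop := ∀ u ∈ x.support, (0 : Mᵒᵈ) < u

theorem SuppPos.coeff_eq_zero {x : HahnSeries Mᵒᵈ ℝ} (h : SuppPos x) {u : Mᵒᵈ}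
    (hu : ¬(0 : Mᵒᵈ) < u) : x.coeff u = 0 := by
  by_contra h0
  exact hu (h u h0)

theorem suppPos_zero : SuppPos (0 : HahnSeries Mᵒᵈ ℝ) := by
  intro u hu
  simp at hu

theorem SuppPos.mul {x y : HahnSeries Mᵒᵈ ℝ} (hx : SuppPos x) (hy : SuppPos y) :
    SuppPos (x * y) := by
  intro u hu
  obtain ⟨a, ha, b, hb, rfl⟩ := HahnSeries.support_mul_subset hu
  exact add_pos (hx a ha) (hy b hb)

theorem SuppPos.pow {x : HahnSeries Mᵒᵈ ℝ} (hx : SuppPos x) (n : ℕ) : SuppPos (x ^ (n + 1)) := by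
  induction n with
  | zero => simpa using hx
  | succ n ih => rw [pow_succ]; exact ih.mul hx

theorem SuppPos.smul {x : HahnSeries Mᵒᵈ ℝ} (hx : SuppPos x) (c : ℝ) : SuppPos (c • x) := by
  intro u hu
  apply hx u
  simp only [HahnSeries.mem_support, HahnSeries.coeff_smul] at hu ⊢
  intro h0
  exact hu (by rw [h0, smul_zero])

theorem SuppPos.famSum {ι : Type w} {f : ι → HahnSeries Mᵒᵈ ℝ} (h : ∀ i, SuppPos (f i)) :
    SuppPos (famSum f) := by
  intro u hu
  obtain ⟨i, hi⟩ := famSum_coeff_ne_zero hu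
  exact h i u hi

theorem SuppPos.orderTop_pos {x : HahnSeries Mᵒᵈ ℝ} (h : SuppPos x) : 0 < x.orderTop := by
  by_cases hx : x = 0
  · simp [hx]
  · rw [← HahnSeries.order_eq_orderTop_of_ne_zero hx]
    exact_mod_cast h _ (HahnSeries.coeff_order_eq_zero.not.2 hx)

theorem suppPos_of_orderTop_pos {x : HahnSeries Mᵒᵈ ℝ} (h : 0 < x.orderTop) : SuppPos x := by
  intro u hu
  have := HahnSeries.orderTop_le_of_coeff_ne_zero (hu : x.coeff u ≠ 0)
  exact_mod_cast lt_of_lt_of_le h this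

/-- Perturbing by a series supported strictly above (dually) the order does not change
order and leading coefficient. -/
theorem order_add_of_dominated {x p : HahnSeries Mᵒᵈ ℝ} (hx : x ≠ 0)
    (hp : ∀ u ∈ p.support, x.order < u) :
    (x + p).order = x.order ∧ (x + p).leadingCoeff = x.leadingCoeff := by
  have hpc : ∀ u, u ≤ x.order → p.coeff u = 0 := by
    intro u hu
    by_contra h0
    exact absurd hu (not_le_of_gt (hp u h0))
  have h1 : (x + p).coeff x.order = x.coeff x.order := by
    rw [HahnSeries.coeff_add, hpc _ le_rfl, add_zero]
  have h1' : (x + p).coeff x.order ≠ 0 := by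
    rw [h1]; exact HahnSeries.coeff_order_eq_zero.not.2 hx
  have h2 : ∀ u, u < x.order → (x + p).coeff u = 0 := by
    intro u hu
    rw [HahnSeries.coeff_add, HahnSeries.coeff_eq_zero_of_lt_order hu, hpc _ hu.le, add_zero]
  obtain ⟨ho, hl⟩ := order_eq_of_coeff h1' h2
  refine ⟨ho, ?_⟩
  rw [hl, h1, HahnSeries.leadingCoeff_eq]

theorem gtR.sPos {g : HahnSeries Mᵒᵈ ℝ} (h : gtR g) : SPos g := by
  have := h 0
  rwa [SLt, map_zero, sub_zero] at this

theorem gtR.ne_zero {g : HahnSeries Mᵒᵈ ℝ} (h : gtR g) : g ≠ 0 := h.sPos.ne_zero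

theorem gtR.order_neg {g : HahnSeries Mᵒᵈ ℝ} (h : gtR g) : g.order < 0 := by
  by_contra hc
  push_neg at hc
  have hz := h (g.coeff 0 + 1)
  rw [SLt, sPos_iff] at hz
  set z := g - HahnSeries.C (g.coeff 0 + 1) with hzdef
  have hc0 : z.coeff 0 = -1 := by
    rw [hzdef, HahnSeries.coeff_sub, HahnSeries.C_apply, HahnSeries.coeff_single_same]
    ring
  have hcu : ∀ u, u < (0 : Mᵒᵈ) → z.coeff u = 0 := by
    intro u hu
    rw [hzdef, HahnSeries.coeff_sub, HahnSeries.C_apply, HahnSeries.coeff_single_of_ne hu.ne,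
      HahnSeries.coeff_eq_zero_of_lt_order (lt_of_lt_of_le hu hc), sub_zero]
  obtain ⟨_, hl⟩ := order_eq_of_coeff (by rw [hc0]; norm_num : z.coeff 0 ≠ 0) hcu
  rw [hl, hc0] at hz
  norm_num at hz

theorem gtR.leadingCoeff_pos {g : HahnSeries Mᵒᵈ ℝ} (h : gtR g) : 0 < g.leadingCoeff :=
  sPos_iff.1 h.sPos

theorem support_neg_C_dominated {g : HahnSeries Mᵒᵈ ℝ} (h : gtR g) (r : ℝ) :
    ∀ u ∈ (-(HahnSeries.C r) : HahnSeries Mᵒᵈ ℝ).support, g.order < u := by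
  intro u hu
  rw [HahnSeries.support_neg, HahnSeries.C_apply] at hu
  have := HahnSeries.support_single_subset hu
  rw [Set.mem_singleton_iff] at this
  rw [this]
  exact h.order_neg

theorem order_sub_C {g : HahnSeries Mᵒᵈ ℝ} (h : gtR g) (r : ℝ) :
    (g - HahnSeries.C r).order = g.order ∧
      (g - HahnSeries.C r).leadingCoeff = g.leadingCoeff := by
  rw [sub_eq_add_neg]
  exact order_add_of_dominated h.ne_zero (support_neg_C_dominated h r)

theorem gtR_add_dominated {g p : HahnSeries Mᵒᵈ ℝ} (h : gtR g)
    (hp : ∀ u ∈ p.support, g.order < u) :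
    gtR (g + p) ∧ (g + p).order = g.order ∧ (g + p).leadingCoeff = g.leadingCoeff := by
  refine ⟨?_, order_add_of_dominated h.ne_zero hp⟩
  intro r
  rw [SLt, sPos_iff]
  have hre : g + p - HahnSeries.C r = (g - HahnSeries.C r) + p := by ring
  rw [hre]
  obtain ⟨ho, hl⟩ := order_sub_C h r
  have hne : g - HahnSeries.C r ≠ 0 := (h r).ne_zero
  have h2 := order_add_of_dominated hne (p := p) (by rw [ho]; exact hp)
  rw [h2.2, hl]
  exact h.leadingCoeff_pos

end OrderFacts


section MonFacts

variable {α : Ordinal.{0}}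

theorem monlex_pos {r : Idx α → ℝ} (i : Idx α) (h1 : ∀ j, j < i → r j = 0) (h2 : 0 < r i) :
    (0 : Mon α) < toLex r :=
  ⟨i, fun j hj => (h1 j hj).symm, h2⟩

theorem monlex_neg {r : Idx α → ℝ} (i : Idx α) (h1 : ∀ j, j < i → r j = 0) (h2 : r i < 0) :
    (toLex r : Mon α) < 0 :=
  ⟨i, fun j hj => h1 j hj, h2⟩

theorem ellExp_monExp_neg {β : Ordinal.{0}} (hβ : β < α) :
    monExp α (ellExp α β) < (0 : (Mon α)ᵒᵈ) := by
  have h : (0 : Mon α) < toLex (ellExp α β) := by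
    refine monlex_pos ⟨β, hβ⟩ (fun j hj => ?_) (by simp [ellExp])
    exact if_neg (ne_of_lt (Subtype.coe_lt_coe.2 hj))
  exact h

theorem derExp_monExp_pos {β : Ordinal.{0}} (hβ : 0 < β) (h0 : 0 < α) :
    (0 : (Mon α)ᵒᵈ) < monExp α (derExp α β) := by
  have h : (toLex (derExp α β) : Mon α) < 0 := by
    refine monlex_neg ⟨0, h0⟩
      (fun j hj => absurd (Subtype.coe_lt_coe.2 hj) not_lt_zero)
      (by simp [derExp, hβ])
  exact h

theorem monExp_injective : Function.Injective (monExp α) := fun r s h =>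
  toLex.injective (OrderDual.toDual.injective h)

theorem monExp_zero : monExp α 0 = (0 : (Mon α)ᵒᵈ) := rfl

theorem ellExp_monExp_ne_zero {β : Ordinal.{0}} (hβ : β < α) :
    monExp α (ellExp α β) ≠ (0 : (Mon α)ᵒᵈ) := by
  intro h
  have h0 : ellExp α β = 0 := monExp_injective (h.trans monExp_zero.symm)
  have := congrFun h0 ⟨β, hβ⟩
  simp [ellExp] at this

theorem ellExp_succ_inj {β γ : Idx α} (hsucc : ∀ δ : Ordinal.{0}, δ < α → δ + 1 < α)
    (h : monExp α (ellExp α (β.1 + 1)) = monExp α (ellExp α (γ.1 + 1))) : β = γ := by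
  have h0 : ellExp α (β.1 + 1) = ellExp α (γ.1 + 1) := monExp_injective h
  have hv := congrFun h0 ⟨β.1 + 1, hsucc β.1 β.2⟩
  simp only [ellExp] at hv
  rw [if_pos trivial] at hv
  by_cases hc : β.1 + 1 = γ.1 + 1
  · refine Subtype.ext ?_
    have : Order.succ β.1 = Order.succ γ.1 := by
      rw [← Ordinal.add_one_eq_succ, ← Ordinal.add_one_eq_succ]; exact hc
    exact Order.succ_eq_succ_iff.mp this
  · rw [if_neg hc] at hv
    norm_num at hv

theorem ellExp_lt_ellExp {β γ : Ordinal.{0}} (hβ : β < α)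
    (h : (toLex (ellExp α β) : Mon α) < toLex (ellExp α γ)) : γ < β := by
  obtain ⟨i, hpre, hlt⟩ := h
  have hv : (if i.1 = β then (1 : ℝ) else 0) < (if i.1 = γ then (1 : ℝ) else 0) := hlt
  by_cases h2 : i.1 = γ
  · rw [if_pos h2] at hv
    have h1 : i.1 ≠ β := by
      intro hc
      rw [if_pos hc] at hv
      norm_num at hv
    rcases lt_trichotomy γ β with h' | h' | h'
    · exact h'
    · exact absurd (h2.trans h') h1
    · exfalso
      have hj : (⟨β, hβ⟩ : Idx α) < i := by
        rw [← Subtype.coe_lt_coe, h2]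
        exact h'
      have hp := hpre ⟨β, hβ⟩ hj
      have hp' : (if β = β then (1 : ℝ) else 0) = (if β = γ then (1 : ℝ) else 0) := hp
      have hne : β ≠ γ := fun hc => h1 (h2.trans hc.symm)
      rw [if_pos rfl, if_neg hne] at hp'
      norm_num at hp'
  · rw [if_neg h2] at hv
    by_cases h1 : i.1 = β
    · rw [if_pos h1] at hv
      norm_num at hv
    · rw [if_neg h1] at hv
      norm_num at hv

theorem no_strictAnti_ordinal (g : ℕ → Ordinal.{0}) (h : ∀ n, g (n + 1) < g n) : False := by
  obtain ⟨x, ⟨k, rfl⟩, hmin⟩ := Ordinal.lt_wf.has_min (Set.range g) ⟨g 0, 0, rfl⟩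
  exact hmin (g (k + 1)) ⟨k + 1, rfl⟩ (h k)

theorem support_smul_single {c r : ℝ} {a : (Mon α)ᵒᵈ} :
    (c • (HahnSeries.single a r : LSeries α)).support ⊆ {a} := by
  intro u hu
  rw [HahnSeries.mem_support, HahnSeries.coeff_smul] at hu
  by_contra hne
  rw [HahnSeries.coeff_single_of_ne hne, smul_zero] at hu
  exact hu rfl

theorem isSummable_PL (hsucc : ∀ δ : Ordinal.{0}, δ < α → δ + 1 < α) (ρ : Idx α → ℝ) :
    IsSummable (fun β : Idx α => ρ β • ell α (β.1 + 1)) := by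
  constructor
  · rintro ⟨f, hf, hmem⟩
    have hch : ∀ n, ∃ β : Idx α, f n = toLex (ellExp α (β.1 + 1)) := by
      intro n
      have hm := hmem n
      rw [Set.mem_preimage, Set.mem_iUnion] at hm
      obtain ⟨β, hβ⟩ := hm
      refine ⟨β, ?_⟩
      have hmem2 := support_smul_single (α := α) (hβ : _ ∈ (ρ β • ell α (β.1 + 1)).support)
      rw [Set.mem_singleton_iff] at hmem2
      exact OrderDual.toDual.injective hmem2
    choose b hb using hch
    apply no_strictAnti_ordinal fun n => (b n).1 + 1
    intro n
    have hlt : (toLex (ellExp α ((b n).1 + 1)) : Mon α) < toLex (ellExp α ((b (n+1)).1 + 1)) := by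
      rw [← hb n, ← hb (n+1)]
      exact hf (Nat.lt_succ_self n)
    exact ellExp_lt_ellExp (hsucc _ (b n).2) hlt
  · intro u
    apply Set.Subsingleton.finite
    intro β hβ γ hγ
    have h1 : u = monExp α (ellExp α (β.1 + 1)) := by
      have := support_smul_single (α := α)
        ((hβ : (ρ β • ell α (β.1 + 1)).coeff u ≠ 0) : _ ∈ _)
      rwa [Set.mem_singleton_iff] at this
    have h2 : u = monExp α (ellExp α (γ.1 + 1)) := by
      have := support_smul_single (α := α)
        ((hγ : (ρ γ • ell α (γ.1 + 1)).coeff u ≠ 0) : _ ∈ _)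
      rwa [Set.mem_singleton_iff] at this
    exact ellExp_succ_inj hsucc (h1.symm.trans h2)

theorem PL_coeff (hsucc : ∀ δ : Ordinal.{0}, δ < α → δ + 1 < α) (ρ : Idx α → ℝ) (u : (Mon α)ᵒᵈ) :
    (famSum fun β : Idx α => ρ β • ell α (β.1 + 1)).coeff u =
      ∑ᶠ β : Idx α, ρ β * (if u = monExp α (ellExp α (β.1 + 1)) then 1 else 0) := by
  rw [famSum_coeff (isSummable_PL hsucc ρ)]
  apply finsum_congr
  intro β
  rw [HahnSeries.coeff_smul, ell, monS, HahnSeries.coeff_single]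
  simp [smul_eq_mul]

theorem PL_coeff_e (hsucc : ∀ δ : Ordinal.{0}, δ < α → δ + 1 < α) (ρ : Idx α → ℝ) (γ : Idx α) :
    (famSum fun β : Idx α => ρ β • ell α (β.1 + 1)).coeff (monExp α (ellExp α (γ.1 + 1))) =
      ρ γ := by
  rw [PL_coeff hsucc]
  rw [finsum_eq_single _ γ fun β hβ => ?_]
  · rw [if_pos rfl, mul_one]
  · rw [if_neg fun hc => hβ (ellExp_succ_inj hsucc hc.symm), mul_zero]

theorem PL_coeff_of_ne (hsucc : ∀ δ : Ordinal.{0}, δ < α → δ + 1 < α) (ρ : Idx α → ℝ)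
    {u : (Mon α)ᵒᵈ} (hu : ∀ β : Idx α, u ≠ monExp α (ellExp α (β.1 + 1))) :
    (famSum fun β : Idx α => ρ β • ell α (β.1 + 1)).coeff u = 0 := by
  rw [PL_coeff hsucc]
  apply finsum_eq_zero_of_forall_eq_zero
  intro β
  rw [if_neg (hu β), mul_zero]

end MonFacts


section CompFacts

variable {α : Ordinal.{0}} {D : LSeries α → LSeries α} {C : LSeries α → LSeries α → LSeries α}

/-- The translation `ℓ_0 + t`. -/
noncomputable def tau (α : Ordinal.{0}) (t : ℝ) : LSeries α := ell α 0 + HahnSeries.C t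

theorem comp_add (hC : IsCompositionOp α C) {g : LSeries α} (hg : gtR g) (x y : LSeries α) :
    C (x + y) g = C x g + C y g := (hC.1 g hg).2.1 x y

theorem comp_mul (hC : IsCompositionOp α C) {g : LSeries α} (hg : gtR g) (x y : LSeries α) :
    C (x * y) g = C x g * C y g := (hC.1 g hg).2.2.1 x y

theorem comp_one (hC : IsCompositionOp α C) {g : LSeries α} (hg : gtR g) :
    C 1 g = 1 := (hC.1 g hg).1

theorem comp_CC (hC : IsCompositionOp α C) {g : LSeries α} (hg : gtR g) (c : ℝ) :
    C (HahnSeries.C c) g = HahnSeries.C c := (hC.1 g hg).2.2.2 c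

theorem comp_zero (hC : IsCompositionOp α C) {g : LSeries α} (hg : gtR g) :
    C 0 g = 0 := by
  have h := comp_add hC hg 0 0
  rw [add_zero] at h
  exact left_eq_add.mp h

theorem C_mul_eq_smul (c : ℝ) (x : LSeries α) : HahnSeries.C c * x = c • x := by
  ext u
  rw [HahnSeries.coeff_smul, HahnSeries.C_apply, ← add_zero u,
    HahnSeries.coeff_single_mul_add, add_zero]
  rfl

theorem C_eq_smul_one (c : ℝ) : (HahnSeries.C c : LSeries α) = c • (1 : LSeries α) := by
  rw [← C_mul_eq_smul, mul_one]

theorem comp_smul (hC : IsCompositionOp α C) {g : LSeries α} (hg : gtR g) (c : ℝ)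
    (x : LSeries α) : C (c • x) g = c • C x g := by
  rw [← C_mul_eq_smul, comp_mul hC hg, comp_CC hC hg, C_mul_eq_smul]

theorem comp_pow (hC : IsCompositionOp α C) {g : LSeries α} (hg : gtR g) (x : LSeries α)
    (n : ℕ) : C (x ^ n) g = (C x g) ^ n := by
  induction n with
  | zero => simpa using comp_one hC hg
  | succ n ih => rw [pow_succ, pow_succ, comp_mul hC hg, ih]

theorem comp_ne_zero (hC : IsCompositionOp α C) {g x : LSeries α} (hg : gtR g) (hx : x ≠ 0) :
    C x g ≠ 0 := by
  intro h0
  have h1 : C (x * x⁻¹) g = 1 := by rw [mul_inv_cancel₀ hx, comp_one hC hg]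
  rw [comp_mul hC hg, h0, zero_mul] at h1
  exact zero_ne_one h1

theorem dominated_of_suppC (hg : gtR g) (r : ℝ) :
    ∀ u ∈ (HahnSeries.C r : LSeries α).support, g.order < u := by
  intro u hu
  rw [HahnSeries.C_apply] at hu
  have := HahnSeries.support_single_subset hu
  rw [Set.mem_singleton_iff] at this
  rw [this]
  exact hg.order_neg

theorem dominated_one {g : LSeries α} (hg : gtR g) :
    ∀ u ∈ (1 : LSeries α).support, g.order < u := by
  intro u hu
  rw [HahnSeries.support_one, Set.mem_singleton_iff] at hu
  rw [hu]
  exact hg.order_neg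

theorem prec_of_dominated {x g : LSeries α} (hg : g ≠ 0)
    (hx : ∀ u ∈ x.support, g.order < u) : prec x g := by
  refine ⟨hg, fun m hm => ⟨g.order, ?_, ?_⟩⟩
  · exact HahnSeries.coeff_order_eq_zero.not.2 hg
  · exact hx m hm

theorem support_smul_subset' {x : LSeries α} (t : ℝ) : (t • x).support ⊆ x.support := by
  intro u hu
  rw [HahnSeries.mem_support, HahnSeries.coeff_smul] at hu
  rw [HahnSeries.mem_support]
  intro h0
  exact hu (by rw [h0, smul_zero])

theorem gtR_ell0 (h0 : 0 < α) : gtR (ell α 0) := by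
  intro r
  rw [SLt, sPos_iff, sub_eq_add_neg]
  have hne : (ell α 0 : LSeries α) ≠ 0 := by
    rw [ell, monS]
    exact HahnSeries.single_ne_zero one_ne_zero
  have horder : (ell α 0 : LSeries α).order = monExp α (ellExp α 0) := by
    rw [ell, monS]
    exact HahnSeries.order_single one_ne_zero
  have hdom : ∀ u ∈ (-(HahnSeries.C r) : LSeries α).support, (ell α 0 : LSeries α).order < u := by
    intro u hu
    rw [HahnSeries.support_neg, HahnSeries.C_apply] at hu
    have := HahnSeries.support_single_subset hu
    rw [Set.mem_singleton_iff] at this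
    rw [this, horder]
    exact ellExp_monExp_neg h0
  rw [(order_add_of_dominated hne hdom).2, ell, monS, HahnSeries.leadingCoeff_of_single]
  norm_num

theorem gtR_tau (h0 : 0 < α) (t : ℝ) : gtR (tau α t) :=
  (gtR_add_dominated (gtR_ell0 h0) (dominated_of_suppC (gtR_ell0 h0) t)).1

theorem tau_zero (hC : IsCompositionOp α C) (f : LSeries α) : C f (tau α 0) = f := by
  rw [tau, map_zero, add_zero]
  exact hC.2.1 f

/-- The Taylor coefficients of `f ∘ (g + t y)` in the variable `t`. -/
noncomputable def tayCoeff (D : LSeries α → LSeries α) (C : LSeries α → LSeries α → LSeries α)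
    (f g y : LSeries α) (u : (Mon α)ᵒᵈ) (n : ℕ) : ℝ :=
  (C (D^[n] f) g * y ^ n).coeff u * ((n.factorial : ℝ))⁻¹

theorem taylorSmul (hT : AdmitsTaylor α D C) {g y : LSeries α} (f : LSeries α) (hg : gtR g)
    (hy : ∀ u ∈ y.support, g.order < u) :
    (∀ u, (Function.support (tayCoeff D C f g y u)).Finite) ∧
      ∀ t u, (C f (g + t • y)).coeff u = ∑ᶠ n, tayCoeff D C f g y u n * t ^ n := by
  have hprec : ∀ t : ℝ, prec (t • y) g := by
    intro t
    exact prec_of_dominated hg.ne_zero fun u hu => hy u (support_smul_subset' t hu)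
  have htay := fun t : ℝ => hT f g (t • y) hg (hprec t)
  have hcoeff : ∀ t u n, (((n.factorial : ℝ))⁻¹ • (C (D^[n] f) g * (t • y) ^ n)).coeff u =
      tayCoeff D C f g y u n * t ^ n := by
    intro t u n
    have h1 : C (D^[n] f) g * (t • y) ^ n =
        HahnSeries.C (t ^ n) * (C (D^[n] f) g * y ^ n) := by
      rw [← C_mul_eq_smul, mul_pow, ← map_pow, mul_left_comm]
    rw [HahnSeries.coeff_smul, h1, C_mul_eq_smul, HahnSeries.coeff_smul, tayCoeff]
    simp only [smul_eq_mul]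
    ring
  constructor
  · intro u
    have hfin := (htay 1).1.2 u
    refine hfin.subset fun n hn => ?_
    have h1 := hcoeff 1 u n
    rw [one_pow, mul_one] at h1
    rw [Function.mem_support] at hn
    show ¬_ = 0
    rw [h1]
    exact hn
  · intro t u
    rw [(htay t).2, famSum_coeff (htay t).1]
    exact finsum_congr fun n => hcoeff t u n

theorem tayCoeff_ell0 (hC : IsCompositionOp α C) (f : LSeries α) (u : (Mon α)ᵒᵈ) (n : ℕ) :
    tayCoeff D C f (ell α 0) 1 u n = (D^[n] f).coeff u * ((n.factorial : ℝ))⁻¹ := by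
  rw [tayCoeff, one_pow, mul_one, hC.2.1]

theorem comp_tau_coeff (hC : IsCompositionOp α C) (hT : AdmitsTaylor α D C) (h0 : 0 < α)
    (f : LSeries α) :
    ∀ t u, (C f (tau α t)).coeff u =
      ∑ᶠ n, ((D^[n] f).coeff u * ((n.factorial : ℝ))⁻¹) * t ^ n := by
  intro t u
  have h1 : tau α t = ell α 0 + t • (1 : LSeries α) := by
    rw [tau, C_eq_smul_one]
  rw [h1, (taylorSmul hT f (gtR_ell0 h0) (dominated_one (gtR_ell0 h0))).2 t u]
  exact finsum_congr fun n => by rw [tayCoeff_ell0 hC]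

theorem tayCoeff_ell0_finite (hC : IsCompositionOp α C) (hT : AdmitsTaylor α D C) (h0 : 0 < α)
    (f : LSeries α) (u : (Mon α)ᵒᵈ) :
    (Function.support fun n => (D^[n] f).coeff u * ((n.factorial : ℝ))⁻¹).Finite := by
  have := (taylorSmul hT f (gtR_ell0 h0) (dominated_one (gtR_ell0 h0))).1 u
  refine this.subset fun n hn => ?_
  rw [Function.mem_support] at hn ⊢
  rwa [tayCoeff_ell0 hC]

end CompFacts


section SuppPosComp

variable {α : Ordinal.{0}} {D : LSeries α → LSeries α} {C : LSeries α → LSeries α → LSeries α}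

theorem isSummable_zero {ι : Type w} : IsSummable fun _ : ι => (0 : LSeries α) := by
  constructor
  · rintro ⟨f, hf, hmem⟩
    have := hmem 0
    simp [HahnSeries.support_zero] at this
  · intro u
    simp

theorem famSum_zero {ι : Type w} : famSum (fun _ : ι => (0 : LSeries α)) = 0 := by
  apply HahnSeries.coeff_inj.mp
  funext u
  rw [famSum_coeff isSummable_zero]
  simp

theorem isSummable_powers {x : LSeries α} (hx : SuppPos x) :
    IsSummable fun n : ℕ => x ^ (n + 1) := by
  by_cases hx0 : x = 0
  · subst hx0
    have h : (fun n : ℕ => (0 : LSeries α) ^ (n + 1)) = fun _ : ℕ => (0 : LSeries α) :=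
      funext fun n => zero_pow (Nat.succ_ne_zero n)
    rw [h]
    exact isSummable_zero
  · have hOT : 0 < x.orderTop := hx.orderTop_pos
    have base : IsSummable fun n : ℕ => x ^ n :=
      ⟨wellBased_of_isPWO (by
          have := (HahnSeries.SummableFamily.powers x).isPWO_iUnion_support
          rwa [HahnSeries.SummableFamily.coe_powers hOT] at this),
        fun g => by
          have := (HahnSeries.SummableFamily.powers x).finite_co_support g
          rwa [HahnSeries.SummableFamily.coe_powers hOT] at this⟩
    exact base.comp_injective Nat.succ_injective

theorem suppPos_of_isSummable_powers {y : LSeries α}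
    (h : IsSummable fun n : ℕ => y ^ (n + 1)) : SuppPos y := by
  by_cases hy : y = 0
  · subst hy
    exact suppPos_zero
  have hord : ∀ n : ℕ, ((n + 1) • y.order) ∈ (y ^ (n + 1)).support := by
    intro n
    rw [← HahnSeries.order_pow]
    exact HahnSeries.coeff_order_eq_zero.not.2 (pow_ne_zero _ hy)
  rcases lt_trichotomy y.order 0 with hlt | heq | hgt
  · exfalso
    apply h.1
    have hstep : ∀ k : ℕ, (k + 1) • y.order < 0 := by
      intro k
      induction k with
      | zero => simpa using hlt
      | succ k ih =>
        rw [succ_nsmul]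
        exact add_neg ih hlt
    refine ⟨fun n => OrderDual.ofDual ((n + 1) • y.order), ?_, ?_⟩
    · intro a b hab
      show (b + 1) • y.order < (a + 1) • y.order
      have hsplit : b + 1 = (a + 1) + (b - a) := by omega
      rw [hsplit, add_nsmul]
      have hneg : (b - a) • y.order < 0 := by
        obtain ⟨k, hk⟩ : ∃ k, b - a = k + 1 := ⟨b - a - 1, by omega⟩
        rw [hk]
        exact hstep k
      exact add_lt_iff_neg_left.mpr hneg
    · intro n
      exact Set.mem_iUnion.2 ⟨n, hord n⟩
  · exfalso
    have hmem : ∀ n : ℕ, n ∈ {i : ℕ | (y ^ (i + 1)).coeff 0 ≠ 0} := by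
      intro n
      have hn := hord n
      rw [heq] at hn
      simpa using hn
    exact Set.infinite_of_injective_forall_mem Function.injective_id hmem (h.2 0)
  · intro u hu
    exact lt_of_lt_of_le hgt (HahnSeries.order_le_of_coeff_ne_zero hu)

theorem suppPos_comp (hC : IsCompositionOp α C) {x h : LSeries α} (hx : SuppPos x)
    (hh : gtR h) : SuppPos (C x h) := by
  have hup : IsSummable fun k : ULift.{1} ℕ => x ^ (k.down + 1) :=
    (isSummable_powers hx).comp_injective ULift.down_injective
  obtain ⟨hsum2, -⟩ := hC.2.2.2.2.1 h hh (fun k : ULift.{1} ℕ => x ^ (k.down + 1)) hup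
  have hdown : IsSummable fun n : ℕ => C (x ^ (n + 1)) h :=
    hsum2.comp_injective ULift.up_injective
  have hrw : (fun n : ℕ => C (x ^ (n + 1)) h) = fun n : ℕ => (C x h) ^ (n + 1) :=
    funext fun n => comp_pow hC hh x (n + 1)
  rw [hrw] at hdown
  exact suppPos_of_isSummable_powers hdown

theorem suppPos_iterate_D (hC : IsCompositionOp α C) (hT : AdmitsTaylor α D C) (h0 : 0 < α)
    {x : LSeries α} (hx : SuppPos x) (n : ℕ) : SuppPos (D^[n] x) := by
  intro u hu
  by_contra hne
  have hzero : ∀ t : ℝ, (C x (tau α t)).coeff u = 0 := fun t =>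
    (suppPos_comp hC hx (gtR_tau h0 t)).coeff_eq_zero hne
  have hrep := comp_tau_coeff hC hT h0 x
  have hfin := tayCoeff_ell0_finite hC hT h0 x u
  have hz : (D^[n] x).coeff u * ((n.factorial : ℝ))⁻¹ = 0 := by
    have hp : ∀ t : ℝ, (0 : Polynomial ℝ).eval t =
        ∑ᶠ m, ((D^[m] x).coeff u * ((m.factorial : ℝ))⁻¹) * t ^ m := by
      intro t
      rw [Polynomial.eval_zero, ← hrep t u, hzero t]
    have := polyRep_coeff hfin hp n
    rw [Polynomial.coeff_zero] at this
    exact this.symm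
  rcases mul_eq_zero.mp hz with h1 | h1
  · exact hu h1
  · exact (inv_ne_zero (Nat.cast_ne_zero.2 (Nat.factorial_ne_zero n))) h1

theorem suppPos_D (hD : IsDerL α D) (hC : IsCompositionOp α C) (hT : AdmitsTaylor α D C)
    (h0 : 0 < α) {x : LSeries α} (hx : SuppPos x) : SuppPos (D x) := by
  have := suppPos_iterate_D (D := D) hC hT h0 hx 1
  rwa [Function.iterate_one] at this

end SuppPosComp


section LogFacts

variable {α : Ordinal.{0}}

theorem domExp_eq {f : LSeries α} (hf : f ≠ 0) :
    domExp α f = ofLex (OrderDual.ofDual f.order) := by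
  rw [domExp, dif_neg hf, HahnSeries.order_of_ne hf]

theorem monExp_domExp {f : LSeries α} (hf : f ≠ 0) : monExp α (domExp α f) = f.order := by
  rw [domExp_eq hf]
  rfl

theorem single_inv' {a : (Mon α)ᵒᵈ} {r : ℝ} (hr : r ≠ 0) :
    (HahnSeries.single a r : LSeries α)⁻¹ = HahnSeries.single (-a) r⁻¹ := by
  apply inv_eq_of_mul_eq_one_right
  rw [HahnSeries.single_mul_single, add_neg_cancel, mul_inv_cancel₀ hr,
    HahnSeries.single_zero_one]

theorem mul_single_neg_coeff (x : LSeries α) (o : (Mon α)ᵒᵈ) (c : ℝ) (u : (Mon α)ᵒᵈ) :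
    (x * HahnSeries.single (-o) c).coeff u = x.coeff (u + o) * c := by
  have h := HahnSeries.coeff_mul_single_add (x := x) (r := c) (a := u + o) (b := -o)
  rwa [add_neg_cancel_right] at h

theorem one_coeff_of_ne {u : (Mon α)ᵒᵈ} (hu : u ≠ 0) : (1 : LSeries α).coeff u = 0 := by
  rw [← HahnSeries.single_zero_one, HahnSeries.coeff_single_of_ne hu]

theorem suppPos_epsOf {f : LSeries α} (hf : f ≠ 0) :
    SuppPos (f * (HahnSeries.single (monExp α (domExp α f)) (leadCoeff f))⁻¹ - 1) := by
  intro u hu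
  by_contra hpos
  apply hu
  push_neg at hpos
  rw [HahnSeries.coeff_sub, monExp_domExp hf, leadCoeff_eq_leadingCoeff,
    single_inv' (HahnSeries.leadingCoeff_ne_zero.2 hf), mul_single_neg_coeff]
  rcases lt_or_eq_of_le hpos with hlt | heq
  · have h1 : u + f.order < f.order := by
      have := add_lt_add_right hlt f.order
      rwa [add_zero, add_comm] at this
    rw [HahnSeries.coeff_eq_zero_of_lt_order h1, zero_mul, one_coeff_of_ne hlt.ne, sub_zero]
  · subst heq
    rw [zero_add, ← HahnSeries.leadingCoeff_eq,
      mul_inv_cancel₀ (HahnSeries.leadingCoeff_ne_zero.2 hf), ← HahnSeries.single_zero_one,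
      HahnSeries.coeff_single_same, sub_self]

theorem suppPos_log1p {e : LSeries α} (he : SuppPos e) : SuppPos (log1p e) := by
  rw [log1p]
  exact SuppPos.famSum fun n => (he.pow n).smul _

theorem logFn_coeff_e (hsucc : ∀ δ : Ordinal.{0}, δ < α → δ + 1 < α) {f : LSeries α}
    (hf : f ≠ 0) (γ : Idx α) :
    (logFn α f).coeff (monExp α (ellExp α (γ.1 + 1))) = domExp α f γ := by
  rw [logFn, HahnSeries.coeff_add, HahnSeries.coeff_add, PL_coeff_e hsucc, HahnSeries.C_apply,
    HahnSeries.coeff_single_of_ne (ellExp_monExp_ne_zero (hsucc _ γ.2)),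
    (suppPos_log1p (suppPos_epsOf hf)).coeff_eq_zero
      (lt_asymm (ellExp_monExp_neg (hsucc _ γ.2)))]
  ring

theorem logFn_coeff_zero (hsucc : ∀ δ : Ordinal.{0}, δ < α → δ + 1 < α) {f : LSeries α}
    (hf : f ≠ 0) : (logFn α f).coeff 0 = Real.log (leadCoeff f) := by
  rw [logFn, HahnSeries.coeff_add, HahnSeries.coeff_add,
    PL_coeff_of_ne hsucc _ (fun β => (ellExp_monExp_ne_zero (hsucc _ β.2)).symm),
    HahnSeries.C_apply, HahnSeries.coeff_single_same,
    (suppPos_log1p (suppPos_epsOf hf)).coeff_eq_zero (lt_irrefl 0)]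
  ring

theorem logFn_monS (hsucc : ∀ δ : Ordinal.{0}, δ < α → δ + 1 < α) (r : Idx α → ℝ) :
    logFn α (monS α r) = famSum fun β : Idx α => r β • ell α (β.1 + 1) := by
  have hne : (monS α r : LSeries α) ≠ 0 := HahnSeries.single_ne_zero one_ne_zero
  have hdom : domExp α (monS α r) = r := by
    rw [domExp_eq hne, monS, HahnSeries.order_single one_ne_zero]
    rfl
  have hlead : leadCoeff (monS α r) = 1 := by
    rw [leadCoeff_eq_leadingCoeff, monS, HahnSeries.leadingCoeff_of_single]
  have heps : monS α r *
      (HahnSeries.single (monExp α (domExp α (monS α r))) (leadCoeff (monS α r)))⁻¹ - 1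
      = 0 := by
    rw [hdom, hlead]
    conv_lhs => rw [monS]
    rw [single_inv' one_ne_zero, HahnSeries.single_mul_single, add_neg_cancel, inv_one,
      mul_one, HahnSeries.single_zero_one, sub_self]
  have hlog : log1p (0 : LSeries α) = 0 := by
    rw [log1p]
    have h : (fun n : ℕ => ((-1 : ℝ) ^ n / ((n : ℝ) + 1)) • (0 : LSeries α) ^ (n + 1))
        = fun _ : ℕ => (0 : LSeries α) := by
      funext n
      rw [zero_pow (Nat.succ_ne_zero n), smul_zero]
    rw [h, famSum_zero]
  rw [logFn, heps, hdom, hlead, Real.log_one, map_zero, add_zero, hlog, add_zero]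

end LogFacts


section Flow

variable {α : Ordinal.{0}} {D : LSeries α → LSeries α} {C : LSeries α → LSeries α → LSeries α}

theorem D_one (hD : IsDerL α D) : D 1 = 0 := by
  have h := hD.2.1 1 1
  simp only [mul_one, one_mul] at h
  exact left_eq_add.mp h

theorem D_C' (hD : IsDerL α D) (c : ℝ) : D (HahnSeries.C c) = 0 := by
  rw [C_eq_smul_one, hD.1.1, D_one hD, smul_zero]

theorem D_PL (hD : IsDerL α D) (hsucc : ∀ δ : Ordinal.{0}, δ < α → δ + 1 < α)
    (ρ : Idx α → ℝ) :
    D (famSum fun β : Idx α => ρ β • ell α (β.1 + 1)) =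
      famSum fun β : Idx α => ρ β • monS α (derExp α (β.1 + 1)) := by
  obtain ⟨-, heq⟩ := hD.1.2.2 (fun β : Idx α => ρ β • ell α (β.1 + 1)) (isSummable_PL hsucc ρ)
  rw [heq]
  congr 1
  funext β
  rw [hD.1.1, hD.2.2 _ (hsucc _ β.2)]

theorem succ_ord_pos (δ : Ordinal.{0}) : (0 : Ordinal.{0}) < δ + 1 := by
  rw [Ordinal.add_one_eq_succ]
  exact (show (0 : Ordinal.{0}) ≤ _ from zero_le).trans_lt (Order.lt_succ _)

theorem D_PL_coeff_nonpos (hD : IsDerL α D) (hsucc : ∀ δ : Ordinal.{0}, δ < α → δ + 1 < α)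
    (h0 : 0 < α) (ρ : Idx α → ℝ) {u : (Mon α)ᵒᵈ} (hu : ¬(0 : (Mon α)ᵒᵈ) < u) :
    (D (famSum fun β : Idx α => ρ β • ell α (β.1 + 1))).coeff u = 0 := by
  rw [D_PL hD hsucc]
  refine (SuppPos.famSum fun β => ?_).coeff_eq_zero hu
  intro v hv
  have hmem := support_smul_single (α := α) hv
  rw [Set.mem_singleton_iff] at hmem
  rw [hmem]
  exact derExp_monExp_pos (succ_ord_pos _) h0

theorem tau_comp_tau (hC : IsCompositionOp α C) (h0 : 0 < α) (t s : ℝ) :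
    C (tau α t) (tau α s) = tau α (s + t) := by
  rw [tau, comp_add hC (gtR_tau h0 s), hC.2.2.1 _ (gtR_tau h0 s), comp_CC hC (gtR_tau h0 s),
    tau, add_assoc, ← map_add]
  rfl

theorem flow_const (hC : IsCompositionOp α C) (hT : AdmitsTaylor α D C) (h0 : 0 < α)
    {F : LSeries α} {u : (Mon α)ᵒᵈ}
    (hvan : ∀ t : ℝ, (D (C F (tau α t))).coeff u = 0) :
    ∀ t, (C F (tau α t)).coeff u = F.coeff u := by
  set a := fun n => (D^[n] F).coeff u * ((n.factorial : ℝ))⁻¹ with ha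
  have hfin := tayCoeff_ell0_finite hC hT h0 F u
  set p := FinPoly a hfin with hp
  have hrep : ∀ t, (C F (tau α t)).coeff u = p.eval t := fun t => by
    rw [hp, FinPoly_eval]
    exact comp_tau_coeff hC hT h0 F t u
  have hder : ∀ t, (Polynomial.derivative p).eval t = 0 := by
    intro t
    rw [← Polynomial.taylor_coeff_one]
    set F' := C F (tau α t) with hF'
    have hb : ∀ s, ((Polynomial.taylor t) p).eval s =
        ∑ᶠ m, ((D^[m] F').coeff u * ((m.factorial : ℝ))⁻¹) * s ^ m := by
      intro s
      rw [Polynomial.taylor_apply, Polynomial.eval_comp]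
      simp only [Polynomial.eval_add, Polynomial.eval_X, Polynomial.eval_C]
      rw [← hrep (s + t)]
      have hcomp : C F (tau α (s + t)) = C F' (tau α s) := by
        rw [hF', hC.2.2.2.2.2 F (tau α t) (tau α s) (gtR_tau h0 t) (gtR_tau h0 s),
          tau_comp_tau hC h0]
      rw [hcomp]
      exact comp_tau_coeff hC hT h0 F' s u
    have hfin' := tayCoeff_ell0_finite hC hT h0 F' u
    have hc1 := polyRep_coeff hfin' hb 1
    rw [hc1]
    simpa using hvan t
  have hdz : Polynomial.derivative p = 0 :=
    Polynomial.funext fun t => by rw [hder t, Polynomial.eval_zero]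
  have hqc := Polynomial.eq_C_of_natDegree_eq_zero
    (Polynomial.natDegree_eq_zero_of_derivative_eq_zero hdz)
  intro t
  have h1 := hrep t
  have h2 := hrep 0
  rw [hqc, Polynomial.eval_C] at h1 h2
  rw [h1, ← h2, tau_zero hC]

theorem mono_comp_tau (hD : IsDerL α D) (hC : IsCompositionOp α C) (hT : AdmitsTaylor α D C)
    (h0 : 0 < α) (hsucc : ∀ δ : Ordinal.{0}, δ < α → δ + 1 < α) (r : Idx α → ℝ) (t : ℝ) :
    (∀ u, (C (monS α r) (tau α t)).coeff u ≠ 0 → monExp α r ≤ u) ∧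
      (C (monS α r) (tau α t)).coeff (monExp α r) = 1 := by
  set w := monS α r with hw
  have hwne : w ≠ 0 := HahnSeries.single_ne_zero one_ne_zero
  have hSw : SPos w := by
    rw [SPos, leadCoeff_eq_leadingCoeff, hw, monS, HahnSeries.leadingCoeff_of_single]
    norm_num
  set G := famSum fun β : Idx α => r β • ell α (β.1 + 1) with hG
  have hwt : ∀ s : ℝ, C w (tau α s) ≠ 0 := fun s => comp_ne_zero hC (gtR_tau h0 s) hwne
  have hCL3 : ∀ s : ℝ, C G (tau α s) = logFn α (C w (tau α s)) := by
    intro s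
    rw [hG, ← logFn_monS hsucc r, ← hw]
    exact hC.2.2.2.1 w (tau α s) (gtR_tau h0 s) hSw
  have hvan : ∀ (u : (Mon α)ᵒᵈ), ¬(0 : (Mon α)ᵒᵈ) < u →
      ∀ s : ℝ, (D (C G (tau α s))).coeff u = 0 := by
    intro u hu s
    rw [hCL3 s, logFn, hD.1.2.1, hD.1.2.1, HahnSeries.coeff_add, HahnSeries.coeff_add,
      D_PL_coeff_nonpos hD hsucc h0 _ hu, D_C' hD, HahnSeries.coeff_zero,
      (suppPos_D hD hC hT h0 (suppPos_log1p (suppPos_epsOf (hwt s)))).coeff_eq_zero hu]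
    ring
  have hconstE : ∀ (γ : Idx α) (s : ℝ), domExp α (C w (tau α s)) γ = r γ := by
    intro γ s
    have h1 := flow_const hC hT h0
      (hvan _ (lt_asymm (ellExp_monExp_neg (hsucc _ γ.2)))) s
    have h2 : (C G (tau α s)).coeff (monExp α (ellExp α (γ.1 + 1)))
        = domExp α (C w (tau α s)) γ := by
      rw [hCL3 s]
      exact logFn_coeff_e hsucc (hwt s) γ
    have h3 : G.coeff (monExp α (ellExp α (γ.1 + 1))) = r γ := PL_coeff_e hsucc r γ
    rw [← h2, h1, h3]
  have horder : ∀ s : ℝ, (C w (tau α s)).order = monExp α r := by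
    intro s
    have h := monExp_domExp (hwt s)
    have hdom : domExp α (C w (tau α s)) = r := funext fun γ => hconstE γ s
    rw [hdom] at h
    exact h.symm
  have hi : ∀ u, (C w (tau α t)).coeff u ≠ 0 → monExp α r ≤ u := by
    intro u hu
    rw [← horder t]
    exact HahnSeries.order_le_of_coeff_ne_zero hu
  have hlog0 : ∀ s : ℝ, Real.log (leadCoeff (C w (tau α s))) = 0 := by
    intro s
    have h1 := flow_const hC hT h0 (hvan 0 (lt_irrefl 0)) s
    have h2 : (C G (tau α s)).coeff 0 = Real.log (leadCoeff (C w (tau α s))) := by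
      rw [hCL3 s]
      exact logFn_coeff_zero hsucc (hwt s)
    have h3 : G.coeff (0 : (Mon α)ᵒᵈ) = 0 :=
      PL_coeff_of_ne hsucc r fun β => (ellExp_monExp_ne_zero (hsucc _ β.2)).symm
    rw [← h2, h1, h3]
  have hcoeffeq : ∀ s : ℝ, (C w (tau α s)).coeff (monExp α r) = leadCoeff (C w (tau α s)) := by
    intro s
    rw [leadCoeff_eq_leadingCoeff, HahnSeries.leadingCoeff_eq, horder s]
  have hφfin := tayCoeff_ell0_finite hC hT h0 w (monExp α r)
  set q := FinPoly _ hφfin with hq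
  have hqeval : ∀ s : ℝ, q.eval s = leadCoeff (C w (tau α s)) := by
    intro s
    rw [hq, FinPoly_eval, ← comp_tau_coeff hC hT h0 w s (monExp α r), hcoeffeq s]
  have habs : ∀ s : ℝ, leadCoeff (C w (tau α s)) = 1 ∨ leadCoeff (C w (tau α s)) = -1 := by
    intro s
    have hne : leadCoeff (C w (tau α s)) ≠ 0 := by
      rw [leadCoeff_eq_leadingCoeff]
      exact HahnSeries.leadingCoeff_ne_zero.2 (hwt s)
    rcases Real.log_eq_zero.mp (hlog0 s) with h | h | h
    · exact absurd h hne
    · exact Or.inl h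
    · exact Or.inr h
  have hq2 : q * q = 1 := Polynomial.funext fun s => by
    rw [Polynomial.eval_mul, hqeval s, Polynomial.eval_one]
    rcases habs s with h | h <;> rw [h] <;> norm_num
  have hqc := Polynomial.eq_C_of_natDegree_eq_zero
    (Polynomial.natDegree_eq_zero_iff_degree_le_zero.mpr
      (Polynomial.isUnit_iff_degree_eq_zero.mp (IsUnit.of_mul_eq_one _ hq2)).le)
  have hq0 : q.eval 0 = 1 := by
    rw [hqeval 0, tau_zero hC, leadCoeff_eq_leadingCoeff, hw, monS,
      HahnSeries.leadingCoeff_of_single]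
  refine ⟨hi, ?_⟩
  have h1 := hqeval t
  rw [hqc, Polynomial.eval_C] at h1 hq0
  rw [hcoeffeq t, ← h1, hq0]

end Flow


section Msupp

variable {α : Ordinal.{0}} {D : LSeries α → LSeries α} {C : LSeries α → LSeries α → LSeries α}

theorem smul_single_eq {m : (Mon α)ᵒᵈ} {c : ℝ} :
    (HahnSeries.single m c : LSeries α) = c • HahnSeries.single m 1 := by
  apply HahnSeries.coeff_inj.mp
  funext u
  rw [HahnSeries.coeff_smul, HahnSeries.coeff_single, HahnSeries.coeff_single]
  split <;> simp

theorem monS_ofLex (m : (Mon α)ᵒᵈ) :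
    monS α (ofLex (OrderDual.ofDual m)) = HahnSeries.single m 1 := rfl

theorem monExp_ofLex (m : (Mon α)ᵒᵈ) : monExp α (ofLex (OrderDual.ofDual m)) = m := rfl

theorem isSummable_decomp (x : LSeries α) :
    IsSummable fun m : (Mon α)ᵒᵈ => (HahnSeries.single m (x.coeff m) : LSeries α) := by
  constructor
  · have hsub : (⋃ m, (HahnSeries.single m (x.coeff m) : LSeries α).support) ⊆ x.support := by
      intro u hu
      rw [Set.mem_iUnion] at hu
      obtain ⟨m, hm⟩ := hu
      have hs := HahnSeries.support_single_subset hm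
      rw [Set.mem_singleton_iff] at hs
      subst hs
      rw [HahnSeries.mem_support, HahnSeries.coeff_single_same] at hm
      exact hm
    exact (wellBased_of_isPWO x.isPWO_support).mono (Set.preimage_mono hsub)
  · intro u
    refine (Set.finite_singleton u).subset fun m hm => ?_
    rw [Set.mem_setOf_eq] at hm
    by_contra hne
    rw [HahnSeries.coeff_single_of_ne fun h => hne h.symm] at hm
    exact hm rfl

theorem decomp_eq (x : LSeries α) :
    famSum (fun m : (Mon α)ᵒᵈ => (HahnSeries.single m (x.coeff m) : LSeries α)) = x := by
  apply HahnSeries.coeff_inj.mp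
  funext u
  rw [famSum_coeff (isSummable_decomp x), finsum_eq_single _ u
    fun m hm => HahnSeries.coeff_single_of_ne (Ne.symm hm), HahnSeries.coeff_single_same]

theorem comp_tau_coeff_const (hD : IsDerL α D) (hC : IsCompositionOp α C)
    (hT : AdmitsTaylor α D C) (h0 : 0 < α)
    (hsucc : ∀ δ : Ordinal.{0}, δ < α → δ + 1 < α) {x : LSeries α} (hx : x ≠ 0) :
    ∀ (t : ℝ) (u : (Mon α)ᵒᵈ), u ≤ x.order → (C x (tau α t)).coeff u = x.coeff u := by
  intro t u hu
  have hfam := hC.2.2.2.2.1 (tau α t) (gtR_tau h0 t) _ (isSummable_decomp x)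
  have hdec : C x (tau α t) = famSum fun m : (Mon α)ᵒᵈ =>
      C (HahnSeries.single m (x.coeff m)) (tau α t) := by
    conv_lhs => rw [← decomp_eq x]
    exact hfam.2
  have hterm : ∀ m : (Mon α)ᵒᵈ, (C (HahnSeries.single m (x.coeff m)) (tau α t)).coeff u =
      x.coeff m * (C (HahnSeries.single m 1) (tau α t)).coeff u := by
    intro m
    rw [smul_single_eq, comp_smul hC (gtR_tau h0 t), HahnSeries.coeff_smul, smul_eq_mul]
  have hmono := fun m : (Mon α)ᵒᵈ =>
    mono_comp_tau hD hC hT h0 hsucc (ofLex (OrderDual.ofDual m)) t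
  rw [hdec, famSum_coeff hfam.1, finsum_eq_single _ u ?_]
  · rw [hterm u]
    by_cases hcu : x.coeff u = 0
    · rw [hcu, zero_mul]
    · have h1 : x.order ≤ u := HahnSeries.order_le_of_coeff_ne_zero hcu
      have h2 : u = x.order := le_antisymm hu h1
      have h3 := (hmono u).2
      rw [monS_ofLex, monExp_ofLex] at h3
      rw [h3, mul_one]
  · intro m hm
    rw [hterm m]
    by_cases hcm : x.coeff m = 0
    · rw [hcm, zero_mul]
    by_cases hc2 : (C (HahnSeries.single m 1) (tau α t)).coeff u = 0
    · rw [hc2, mul_zero]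
    exfalso
    have hmono1 := (hmono m).1
    rw [monS_ofLex, monExp_ofLex] at hmono1
    have h1 : m ≤ u := hmono1 u hc2
    have h2 : x.order ≤ m := HahnSeries.order_le_of_coeff_ne_zero hcm
    exact hm (le_antisymm h1 (hu.trans h2))

theorem Msupp (hD : IsDerL α D) (hC : IsCompositionOp α C) (hT : AdmitsTaylor α D C)
    (h0 : 0 < α) (hsucc : ∀ δ : Ordinal.{0}, δ < α → δ + 1 < α) {x : LSeries α} (hx : x ≠ 0)
    {n : ℕ} (hn : 1 ≤ n) {u : (Mon α)ᵒᵈ} (hu : u ≤ x.order) : (D^[n] x).coeff u = 0 := by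
  have hconst := comp_tau_coeff_const hD hC hT h0 hsucc hx
  have hfin := tayCoeff_ell0_finite hC hT h0 x u
  have hp : ∀ t : ℝ, (Polynomial.C (x.coeff u)).eval t =
      ∑ᶠ m, ((D^[m] x).coeff u * ((m.factorial : ℝ))⁻¹) * t ^ m := by
    intro t
    rw [Polynomial.eval_C, ← comp_tau_coeff hC hT h0 x t u, hconst t u hu]
  have := polyRep_coeff hfin hp n
  rw [Polynomial.coeff_C, if_neg (by omega)] at this
  rcases mul_eq_zero.mp this.symm with h1 | h1
  · exact h1
  · exact absurd h1 (inv_ne_zero (Nat.cast_ne_zero.2 (Nat.factorial_ne_zero n)))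

theorem Msupp_dominated (hD : IsDerL α D) (hC : IsCompositionOp α C) (hT : AdmitsTaylor α D C)
    (h0 : 0 < α) (hsucc : ∀ δ : Ordinal.{0}, δ < α → δ + 1 < α) {x : LSeries α} (hx : x ≠ 0)
    {n : ℕ} (hn : 1 ≤ n) : ∀ u ∈ (D^[n] x).support, x.order < u := by
  intro u hu
  by_contra hc
  push_neg at hc
  exact (hu : (D^[n] x).coeff u ≠ 0) (Msupp hD hC hT h0 hsucc hx hn hc)

end Msupp


section PolyFam

open Pointwise

variable {α : Ordinal.{0}} {D : LSeries α → LSeries α} {C : LSeries α → LSeries α → LSeries α}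

theorem support_famSum_subset {ι : Type w} {f : ι → LSeries α} :
    (famSum f).support ⊆ ⋃ i, (f i).support := fun u hu => by
  obtain ⟨i, hi⟩ := famSum_coeff_ne_zero hu
  exact Set.mem_iUnion.2 ⟨i, hi⟩

theorem mul_coeff_superset {x y : LSeries α} {S T : Set (Mon α)ᵒᵈ} (hS : S.IsPWO)
    (hT : T.IsPWO) (hxs : x.support ⊆ S) (hyt : y.support ⊆ T) (u : (Mon α)ᵒᵈ) :
    (x * y).coeff u = ∑ ij ∈ Finset.antidiagonal hS hT u, x.coeff ij.1 * y.coeff ij.2 := by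
  rw [HahnSeries.coeff_mul]
  apply Finset.sum_subset
  · intro ij hij
    rw [Finset.mem_addAntidiagonal] at hij ⊢
    exact ⟨hxs hij.1, hyt hij.2.1, hij.2.2⟩
  · intro ij hij hnot
    rw [Finset.mem_addAntidiagonal] at hij hnot
    by_cases h1 : x.coeff ij.1 = 0
    · rw [h1, zero_mul]
    by_cases h2 : y.coeff ij.2 = 0
    · rw [h2, mul_zero]
    exact absurd ⟨h1, h2, hij.2.2⟩ hnot

/-- A family of series, parametrised by a real number, with uniformly bounded (PWO) support,
polynomial coefficient functions, all divisible by `X ^ d`. -/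
def PolyFamAt (x : ℝ → LSeries α) (d : ℕ) : Prop :=
  ∃ S : Set (Mon α)ᵒᵈ, S.IsPWO ∧ (∀ t, (x t).support ⊆ S) ∧
    ∀ u, ∃ p : Polynomial ℝ, (Polynomial.X ^ d ∣ p) ∧ ∀ t, (x t).coeff u = p.eval t

theorem PolyFamAt.mul {x y : ℝ → LSeries α} {d e : ℕ} (hx : PolyFamAt x d)
    (hy : PolyFamAt y e) : PolyFamAt (fun t => x t * y t) (d + e) := by
  obtain ⟨S, hS, hxs, hxc⟩ := hx
  obtain ⟨T, hT', hyt, hyc⟩ := hy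
  choose px hpxd hpx using hxc
  choose py hpyd hpy using hyc
  refine ⟨S + T, hS.add hT', fun t => ?_, fun u => ?_⟩
  · exact HahnSeries.support_mul_subset.trans (Set.add_subset_add (hxs t) (hyt t))
  · refine ⟨∑ ij ∈ Finset.addAntidiagonal hS hT' u, px ij.1 * py ij.2, ?_, ?_⟩
    · apply Finset.dvd_sum
      intro ij _
      rw [pow_add]
      exact mul_dvd_mul (hpxd ij.1) (hpyd ij.2)
    · intro t
      rw [mul_coeff_superset hS hT' (hxs t) (hyt t), Polynomial.eval_finset_sum]
      exact Finset.sum_congr rfl fun ij _ => by rw [Polynomial.eval_mul, hpx ij.1 t, hpy ij.2 t]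

theorem PolyFamAt.const (z : LSeries α) : PolyFamAt (fun _ : ℝ => z) 0 :=
  ⟨z.support, z.isPWO_support, fun _ => subset_rfl, fun u =>
    ⟨Polynomial.C (z.coeff u), by simp, fun t => by simp⟩⟩

theorem PolyFamAt.pow {x : ℝ → LSeries α} {d : ℕ} (hx : PolyFamAt x d) :
    ∀ m : ℕ, PolyFamAt (fun t => (x t) ^ m) (d * m)
  | 0 => by
    simp only [pow_zero, Nat.mul_zero]
    exact PolyFamAt.const 1
  | (m + 1) => by
    have h := (hx.pow m).mul hx
    have he : (fun t => (x t) ^ m * x t) = fun t => (x t) ^ (m + 1) :=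
      funext fun t => (pow_succ (x t) m).symm
    rw [he] at h
    rwa [Nat.mul_succ]

theorem PolyFamAt.smul {x : ℝ → LSeries α} {d : ℕ} (hx : PolyFamAt x d) (c : ℝ) :
    PolyFamAt (fun t => c • x t) d := by
  obtain ⟨S, hS, hs, hc⟩ := hx
  refine ⟨S, hS, fun t => (support_smul_subset' c).trans (hs t), fun u => ?_⟩
  obtain ⟨p, hpd, hp⟩ := hc u
  exact ⟨Polynomial.C c * p, hpd.mul_left _, fun t => by
    rw [HahnSeries.coeff_smul, hp t, Polynomial.eval_mul, Polynomial.eval_C, smul_eq_mul]⟩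

theorem PolyFamAt.dvd_le {x : ℝ → LSeries α} {d e : ℕ} (hx : PolyFamAt x d) (he : e ≤ d) :
    PolyFamAt x e := by
  obtain ⟨S, hS, hs, hc⟩ := hx
  refine ⟨S, hS, hs, fun u => ?_⟩
  obtain ⟨p, hpd, hp⟩ := hc u
  exact ⟨p, (pow_dvd_pow _ he).trans hpd, hp⟩

end PolyFam


section Assembly

variable {α : Ordinal.{0}} {D : LSeries α → LSeries α} {C : LSeries α → LSeries α → LSeries α}

theorem kfun_rep (hC : IsCompositionOp α C) (hT : AdmitsTaylor α D C) (h0 : 0 < α)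
    {g : LSeries α} (t : ℝ) (u : (Mon α)ᵒᵈ) :
    (C g (tau α t) - g - t • D g).coeff u =
      ∑ᶠ n, (if n < 2 then (0 : ℝ) else (D^[n] g).coeff u * ((n.factorial : ℝ))⁻¹) * t ^ n := by
  set a := fun n => (D^[n] g).coeff u * ((n.factorial : ℝ))⁻¹ with ha
  have hfa : (Function.support a).Finite := tayCoeff_ell0_finite hC hT h0 g u
  set F1 := fun n => a n * t ^ n with hF1
  have hfF1 : (Function.support F1).Finite := hfa.subset fun n hn => by
    rw [Function.mem_support] at hn ⊢
    intro h0'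
    exact hn (by rw [hF1]; simp only [h0', zero_mul])
  have hfF1s : (Function.support fun n => F1 (n + 1)).Finite :=
    hfF1.preimage (add_left_injective 1).injOn
  set K1 := fun n => (if n < 2 then (0 : ℝ) else a n) * t ^ n with hK1
  have hfK1 : (Function.support K1).Finite := hfF1.subset fun n hn => by
    rw [Function.mem_support] at hn ⊢
    intro h0'
    apply hn
    show (if n < 2 then (0 : ℝ) else a n) * t ^ n = 0
    by_cases h2 : n < 2
    · rw [if_pos h2, zero_mul]
    · rw [if_neg h2]
      exact h0'
  have hfK1s : (Function.support fun n => K1 (n + 1)).Finite :=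
    hfK1.preimage (add_left_injective 1).injOn
  have hLsplit : ∑ᶠ n, F1 n = F1 0 + (F1 1 + ∑ᶠ n, F1 (n + 2)) := by
    rw [finsum_nat_succ F1 hfF1, finsum_nat_succ (fun n => F1 (n + 1)) hfF1s]
  have hRsplit : ∑ᶠ n, K1 n = K1 0 + (K1 1 + ∑ᶠ n, K1 (n + 2)) := by
    rw [finsum_nat_succ K1 hfK1, finsum_nat_succ (fun n => K1 (n + 1)) hfK1s]
  have hsame : ∀ n : ℕ, K1 (n + 2) = F1 (n + 2) := by
    intro n
    show (if n + 2 < 2 then (0 : ℝ) else a (n + 2)) * t ^ (n + 2) = a (n + 2) * t ^ (n + 2)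
    rw [if_neg (by omega)]
  have hF10 : F1 0 = g.coeff u := by
    rw [hF1, ha]
    simp [Function.iterate_zero_apply]
  have hF11 : F1 1 = (D g).coeff u * t := by
    rw [hF1, ha]
    simp [Function.iterate_one]
  have hK10 : K1 0 = 0 := by
    show (if 0 < 2 then (0 : ℝ) else a 0) * t ^ 0 = 0
    rw [if_pos (by omega), zero_mul]
  have hK11 : K1 1 = 0 := by
    show (if 1 < 2 then (0 : ℝ) else a 1) * t ^ 1 = 0
    rw [if_pos (by omega), zero_mul]
  have hcomp := comp_tau_coeff hC hT h0 g t u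
  rw [HahnSeries.coeff_sub, HahnSeries.coeff_sub, HahnSeries.coeff_smul, smul_eq_mul, hcomp]
  have hcompF1 : ∑ᶠ n, a n * t ^ n = ∑ᶠ n, F1 n := rfl
  rw [hcompF1, hLsplit]
  show _ = ∑ᶠ n, K1 n
  rw [hRsplit, hK10, hK11, hF10, hF11]
  rw [finsum_congr hsame]
  ring

theorem polyFam_kfun (hD : IsDerL α D) (hC : IsCompositionOp α C) (hT : AdmitsTaylor α D C)
    (h0 : 0 < α) (hsucc : ∀ δ : Ordinal.{0}, δ < α → δ + 1 < α) {g : LSeries α} (hg : gtR g) :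
    PolyFamAt (fun t => C g (tau α t) - g - t • D g) 2 ∧
      ∀ t : ℝ, ∀ u ∈ (C g (tau α t) - g - t • D g).support, g.order < u := by
  have hW : (⋃ n : ℕ, (D^[n] g).support).IsPWO := by
    have hprec : prec ((1 : ℝ) • (1 : LSeries α)) (ell α 0) :=
      prec_of_dominated (gtR_ell0 h0).ne_zero fun u hu =>
        dominated_one (gtR_ell0 h0) u (support_smul_subset' 1 hu)
    have hsum := (hT g (ell α 0) ((1 : ℝ) • 1) (gtR_ell0 h0) hprec).1
    apply hsum.isPWO.mono
    intro u hu
    rw [Set.mem_iUnion] at hu ⊢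
    obtain ⟨n, hn⟩ := hu
    refine ⟨n, ?_⟩
    rw [HahnSeries.mem_support] at hn ⊢
    rw [HahnSeries.coeff_smul, one_smul, one_pow, mul_one, hC.2.1, smul_eq_mul]
    exact mul_ne_zero (inv_ne_zero (Nat.cast_ne_zero.2 (Nat.factorial_ne_zero n))) hn
  have hrep := fun (t : ℝ) (u : (Mon α)ᵒᵈ) => kfun_rep (D := D) hC hT h0 (g := g) t u
  have hsupp : ∀ t : ℝ, ∀ u ∈ (C g (tau α t) - g - t • D g).support,
      ∃ n, 2 ≤ n ∧ (D^[n] g).coeff u ≠ 0 := by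
    intro t u hu
    rw [HahnSeries.mem_support, hrep t u] at hu
    by_contra hcon
    push_neg at hcon
    apply hu
    apply finsum_eq_zero_of_forall_eq_zero
    intro n
    by_cases h2 : n < 2
    · rw [if_pos h2, zero_mul]
    · rw [if_neg h2, hcon n (by omega), zero_mul, zero_mul]
  have hdom : ∀ t : ℝ, ∀ u ∈ (C g (tau α t) - g - t • D g).support, g.order < u := by
    intro t u hu
    obtain ⟨n, hn2, hnc⟩ := hsupp t u hu
    by_contra hle
    push_neg at hle
    exact hnc (Msupp hD hC hT h0 hsucc hg.ne_zero (by omega) hle)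
  refine ⟨⟨(⋃ n : ℕ, (D^[n] g).support) ∩ {u | g.order < u}, hW.mono Set.inter_subset_left,
    fun t u hu => ?_, fun u => ?_⟩, hdom⟩
  · obtain ⟨n, hn2, hnc⟩ := hsupp t u hu
    exact ⟨Set.mem_iUnion.2 ⟨n, hnc⟩, hdom t u hu⟩
  · set kc := fun n => if n < 2 then (0 : ℝ) else (D^[n] g).coeff u * ((n.factorial : ℝ))⁻¹
      with hkc
    have hkcfin : (Function.support kc).Finite :=
      (tayCoeff_ell0_finite hC hT h0 g u).subset fun n hn => by
        rw [Function.mem_support] at hn ⊢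
        intro h0'
        apply hn
        show (if n < 2 then (0 : ℝ) else (D^[n] g).coeff u * ((n.factorial : ℝ))⁻¹) = 0
        by_cases h2 : n < 2
        · rw [if_pos h2]
        · rw [if_neg h2, h0']
    refine ⟨FinPoly kc hkcfin, ?_, fun t => ?_⟩
    · rw [Polynomial.X_pow_dvd_iff]
      intro d hd
      rw [FinPoly_coeff]
      show (if d < 2 then (0 : ℝ) else (D^[d] g).coeff u * ((d.factorial : ℝ))⁻¹) = 0
      rw [if_pos hd]
    · rw [FinPoly_eval]
      exact hrep t u

theorem polyFam_comp (hC : IsCompositionOp α C) (hT : AdmitsTaylor α D C) (h0 : 0 < α)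
    {g : LSeries α} (hg : gtR g) (hdom : ∀ u ∈ (D g).support, g.order < u) (F : LSeries α) :
    PolyFamAt (fun t => C F (g + t • D g)) 0 := by
  have hts := taylorSmul hT F hg hdom
  have hprec : prec ((1 : ℝ) • D g) g :=
    prec_of_dominated hg.ne_zero fun u hu => hdom u (support_smul_subset' 1 hu)
  have hsum := (hT F g ((1 : ℝ) • D g) hg hprec).1
  refine ⟨⋃ n : ℕ, (C (D^[n] F) g * (D g) ^ n).support, ?_, ?_, fun u => ?_⟩
  · apply hsum.isPWO.mono
    intro u hu
    rw [Set.mem_iUnion] at hu ⊢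
    obtain ⟨n, hn⟩ := hu
    refine ⟨n, ?_⟩
    rw [HahnSeries.mem_support] at hn ⊢
    rw [HahnSeries.coeff_smul, one_smul, smul_eq_mul]
    exact mul_ne_zero (inv_ne_zero (Nat.cast_ne_zero.2 (Nat.factorial_ne_zero n))) hn
  · intro t u hu
    rw [HahnSeries.mem_support, hts.2 t u] at hu
    rw [Set.mem_iUnion]
    by_contra hcon
    push_neg at hcon
    apply hu
    apply finsum_eq_zero_of_forall_eq_zero
    intro n
    have hz : (C (D^[n] F) g * (D g) ^ n).coeff u = 0 := by
      have hc := hcon n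
      rw [HahnSeries.mem_support, not_not] at hc
      exact hc
    rw [tayCoeff, hz, zero_mul, zero_mul]
  · exact ⟨FinPoly _ (hts.1 u), by simp, fun t => by rw [hts.2 t u, FinPoly_eval]⟩

theorem chain_rule (hD : IsDerL α D) (hC : IsCompositionOp α C) (hT : AdmitsTaylor α D C)
    (h0 : 0 < α) (hsucc : ∀ δ : Ordinal.{0}, δ < α → δ + 1 < α) (f g : LSeries α)
    (hg : gtR g) : D (C f g) = C (D f) g * D g := by
  have hdomg' : ∀ u ∈ (D g).support, g.order < u := by
    have h := Msupp_dominated hD hC hT h0 hsucc hg.ne_zero (n := 1) le_rfl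
    rwa [Function.iterate_one] at h
  set k := fun t : ℝ => C g (tau α t) - g - t • D g with hk
  obtain ⟨hkfam, hkdom⟩ := polyFam_kfun hD hC hT h0 hsucc hg
  have hdomt : ∀ t : ℝ, ∀ u ∈ (t • D g).support, g.order < u := fun t u hu =>
    hdomg' u (support_smul_subset' t hu)
  have hgt : ∀ t : ℝ, gtR (g + t • D g) ∧ (g + t • D g).order = g.order := fun t =>
    ⟨(gtR_add_dominated hg (hdomt t)).1, (gtR_add_dominated hg (hdomt t)).2.1⟩
  have hprec : ∀ t : ℝ, prec (k t) (g + t • D g) := by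
    intro t
    refine prec_of_dominated (hgt t).1.ne_zero fun u hu => ?_
    rw [(hgt t).2]
    exact hkdom t u hu
  have hident : ∀ t : ℝ, C g (tau α t) = (g + t • D g) + k t := by
    intro t
    rw [hk]
    simp only [← C_mul_eq_smul]
    ring
  have hTB := fun t : ℝ => hT f (g + t • D g) (k t) (hgt t).1 (hprec t)
  have hPF : ∀ m : ℕ, PolyFamAt
      (fun t => ((m.factorial : ℝ))⁻¹ • (C (D^[m] f) (g + t • D g) * (k t) ^ m)) (2 * m) := by
    intro m
    have h1 := ((polyFam_comp hC hT h0 hg hdomg' (D^[m] f)).mul (hkfam.pow m)).smul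
      ((m.factorial : ℝ))⁻¹
    rwa [zero_add] at h1
  apply HahnSeries.coeff_inj.mp
  funext u
  have hchoice : ∀ m : ℕ, ∃ p : Polynomial ℝ, (Polynomial.X ^ (2 * m) ∣ p) ∧
      ∀ t, (((m.factorial : ℝ))⁻¹ • (C (D^[m] f) (g + t • D g) * (k t) ^ m)).coeff u
        = p.eval t := by
    intro m
    obtain ⟨S, hS, hs, hcf⟩ := hPF m
    exact hcf u
  choose pm hpmd hpm using hchoice
  have hptw : ∀ t : ℝ, {m : ℕ | (pm m).eval t ≠ 0}.Finite := by
    intro t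
    refine ((hTB t).1.2 u).subset fun m hm => ?_
    rw [Set.mem_setOf_eq] at hm ⊢
    rw [← hpm m t] at hm
    exact hm
  have hTfin := finite_ne_zero_of_pointwise hptw
  set P := ∑ m ∈ hTfin.toFinset, pm m with hP
  have hBrep1 : ∀ t, (C f (C g (tau α t))).coeff u = P.eval t := by
    intro t
    rw [hident t, (hTB t).2, famSum_coeff (hTB t).1, hP, Polynomial.eval_finset_sum]
    rw [finsum_eq_finset_sum_of_support_subset _ (s := hTfin.toFinset) ?_]
    · exact Finset.sum_congr rfl fun m _ => hpm m t
    · intro m hm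
      rw [Function.mem_support] at hm
      rw [Set.Finite.coe_toFinset, Set.mem_setOf_eq]
      intro hp0
      exact hm (by rw [hpm m t, hp0, Polynomial.eval_zero])
  have hBrep2 : ∀ t, (C f (C g (tau α t))).coeff u =
      ∑ᶠ n, ((D^[n] (C f g)).coeff u * ((n.factorial : ℝ))⁻¹) * t ^ n := by
    intro t
    rw [← hC.2.2.2.2.2 f g (tau α t) hg (gtR_tau h0 t)]
    exact comp_tau_coeff hC hT h0 (C f g) t u
  have hfinB := tayCoeff_ell0_finite hC hT h0 (C f g) u
  have hPcoeff := polyRep_coeff hfinB (p := P) (fun t => by rw [← hBrep1 t, hBrep2 t]) 1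
  have hP1 : P.coeff 1 = (pm 0).coeff 1 := by
    rw [hP, Polynomial.finset_sum_coeff]
    by_cases h0T : 0 ∈ hTfin.toFinset
    · refine Finset.sum_eq_single_of_mem 0 h0T fun m hm hne => ?_
      have hd : Polynomial.X ^ 2 ∣ pm m :=
        (pow_dvd_pow _ (by omega : 2 ≤ 2 * m)).trans (hpmd m)
      exact Polynomial.X_pow_dvd_iff.mp hd 1 (by omega)
    · have hz : pm 0 = 0 := by
        by_contra hne
        exact h0T (hTfin.mem_toFinset.2 hne)
      rw [Finset.sum_eq_zero, hz, Polynomial.coeff_zero]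
      intro m hm
      have hm0 : m ≠ 0 := fun h => h0T (h ▸ hm)
      have hd : Polynomial.X ^ 2 ∣ pm m :=
        (pow_dvd_pow _ (by omega : 2 ≤ 2 * m)).trans (hpmd m)
      exact Polynomial.X_pow_dvd_iff.mp hd 1 (by omega)
  have hts := taylorSmul hT f hg hdomg'
  have hp0rep : ∀ t, (pm 0).eval t = ∑ᶠ n, tayCoeff D C f g (D g) u n * t ^ n := by
    intro t
    rw [← hpm 0 t]
    have he : ((Nat.factorial 0 : ℝ))⁻¹ • (C (D^[0] f) (g + t • D g) * (k t) ^ 0)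
        = C f (g + t • D g) := by
      simp [Function.iterate_zero_apply]
    rw [he]
    exact hts.2 t u
  have hp01 := polyRep_coeff (hts.1 u) (fun t => hp0rep t) 1
  have hgoal1 : (D (C f g)).coeff u = P.coeff 1 := by
    rw [hPcoeff]
    simp [Function.iterate_one]
  have hgoal2 : tayCoeff D C f g (D g) u 1 = (C (D f) g * D g).coeff u := by
    rw [tayCoeff]
    simp [Function.iterate_one]
  rw [hgoal1, hP1, hp01, hgoal2]

end Assembly


/-- Every composition on `𝕃_{<ω^λ}` that admits Taylor expansion obeys
the Chain Rule: `(f∘g)' = (f'∘g)·g'` for all `f` and all `g > ℝ`. -/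
theorem statement7 (lam : Ordinal.{0}) (hinf : Ordinal.omega0 ≤ lam) (hlim : Order.IsSuccLimit lam)
    (D : LSeries (Ordinal.omega0 ^ lam) → LSeries (Ordinal.omega0 ^ lam))
    (hD : IsDerL (Ordinal.omega0 ^ lam) D)
    (C : LSeries (Ordinal.omega0 ^ lam) → LSeries (Ordinal.omega0 ^ lam) →
      LSeries (Ordinal.omega0 ^ lam))
    (hC : IsCompositionOp (Ordinal.omega0 ^ lam) C)
    (hT : AdmitsTaylor (Ordinal.omega0 ^ lam) D C) :
    ∀ (f g : LSeries (Ordinal.omega0 ^ lam)), gtR g →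
      D (C f g) = C (D f) g * D g := by
  intro f g hgR
  have hlim' : Order.IsSuccLimit (Ordinal.omega0 ^ lam) :=
    Ordinal.isSuccLimit_opow Ordinal.one_lt_omega0 hlim
  have h0 : (0 : Ordinal.{0}) < Ordinal.omega0 ^ lam := hlim'.pos
  have hsucc : ∀ δ : Ordinal.{0}, δ < Ordinal.omega0 ^ lam →
      δ + 1 < Ordinal.omega0 ^ lam := by
    intro δ hδ
    rw [Ordinal.add_one_eq_succ]
    exact hlim'.succ_lt hδ
  exact chain_rule hD hC hT h0 hsucc f g hgR

end LogHyp
end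
end

section
/- Let α be an ordinal. For a monomial m = ℓ^r ∈ 𝔏_{<α} set ℓ_β† := ∏_{ρ≤β} ℓ_ρ^{-1} (the monomial with exponent −1 at every ρ ≤ β and 0 elsewhere), m† := ∑_{β<α} r_β ℓ_β† ∈ 𝕃_{<α} (this family is summable since the ℓ_β† are strictly decreasing), and m' := m·m†. Then for all m, n ∈ 𝔏_{<α} and t ∈ ℝ: (i) (mn)† = m† + n† and (m^t)† = t·m†; (ii) (mn)' = m'·n + m·n'; (iii) if m ≠ 1 then m' ≠ 0 and m† ≠ 0; (iv) if m ≺ 1 and n ≠ 1, then m' ≺ n†; (v) if m ≺ n and n ≠ 1, then m' ≺ n'; (vi) supp m' ⊆ {ℓ_β† : β < α}·m. -/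
noncomputable section

open Classical

namespace LogHyp

universe u v w

/-- `ℓ_β† := ∏_{ρ≤β} ℓ_ρ⁻¹`, and `m† := ∑_{β<α} r_β ℓ_β†` for `m = ℓ^r`. -/
noncomputable def mdag (α : Ordinal.{0}) (r : Idx α → ℝ) : LSeries α :=
  famSum fun β : Idx α => r β • monS α (dagExp α β.1)

/-- `m' := m·m†` for `m = ℓ^r`. -/
noncomputable def mder (α : Ordinal.{0}) (r : Idx α → ℝ) : LSeries α :=
  monS α r * mdag α r
variable {α : Ordinal.{0}}

lemma monExp_add (r s : Idx α → ℝ) : monExp α (r + s) = monExp α r + monExp α s := rfl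

lemma ofDual_monExp (r : Idx α → ℝ) :
    (OrderDual.ofDual (monExp α r) : Mon α) = toLex r := rfl

lemma lex_lt_of_witness (a b : Idx α → ℝ) (i : Idx α) (h1 : ∀ j, j < i → a j = b j)
    (h2 : a i < b i) : (toLex a : Mon α) < toLex b := ⟨i, h1, h2⟩

lemma lex_lt_elim {a b : Idx α → ℝ} (h : (toLex a : Mon α) < toLex b) :
    ∃ i : Idx α, (∀ j, j < i → a j = b j) ∧ a i < b i := h

lemma dag_strictAnti {β γ : Idx α} (h : β < γ) :
    (toLex (dagExp α γ.1) : Mon α) < toLex (dagExp α β.1) := by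
  have hβ1 : β.1 + 1 ≤ γ.1 := by
    rw [Ordinal.add_one_eq_succ, Order.succ_le_iff]; exact h
  refine lex_lt_of_witness _ _ ⟨β.1 + 1, lt_of_le_of_lt hβ1 γ.2⟩ (fun j hj => ?_) ?_
  · have hjβ : j.1 ≤ β.1 := by
      have h2 : j.1 < β.1 + 1 := hj
      rwa [Ordinal.add_one_eq_succ, Order.lt_succ_iff] at h2
    simp [dagExp, hjβ, hjβ.trans (le_of_lt h)]
  · simp only [dagExp]
    rw [if_pos hβ1, if_neg (not_le.mpr (Order.lt_add_one_iff.mpr le_rfl))]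
    norm_num

lemma dag_inj : Function.Injective (fun β : Idx α => monExp α (dagExp α β.1)) := by
  have : StrictAnti (fun β : Idx α => (toLex (dagExp α β.1) : Mon α)) :=
    fun β γ h => dag_strictAnti h
  intro β γ h
  exact this.injective (by simpa [monExp, OrderDual.toDual.injective.eq_iff] using h)

lemma supp_term (r : Idx α → ℝ) (β : Idx α) :
    (r β • monS α (dagExp α β.1)).support ⊆ {monExp α (dagExp α β.1)} := by
  refine (Function.support_smul_subset_right _ _).trans ?_
  exact HahnSeries.support_single_subset

lemma term_coeff (r : Idx α → ℝ) (β : Idx α) (g : (Mon α)ᵒᵈ) :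
    (r β • monS α (dagExp α β.1)).coeff g =
      if g = monExp α (dagExp α β.1) then r β else 0 := by
  rw [HahnSeries.coeff_smul, monS, HahnSeries.coeff_single]
  split <;> simp

lemma summable_dag (r : Idx α → ℝ) :
    IsSummable fun β : Idx α => r β • monS α (dagExp α β.1) := by
  constructor
  · rintro ⟨f, hmono, hmem⟩
    have hex : ∀ n : ℕ, ∃ β : Idx α, f n = toLex (dagExp α β.1) := by
      intro n
      obtain ⟨β, hS⟩ := Set.mem_iUnion.mp (hmem n)
      exact ⟨β, congrArg OrderDual.ofDual (supp_term r β hS)⟩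
    choose β hβ using hex
    have hdesc : ∀ n, (β (n+1)).1 < (β n).1 := by
      intro n
      have hlt : (toLex (dagExp α (β n).1) : Mon α) < toLex (dagExp α (β (n+1)).1) := by
        rw [← hβ n, ← hβ (n+1)]; exact hmono (Nat.lt_succ_self n)
      rcases lt_trichotomy (β (n+1)) (β n) with h | h | h
      · exact h
      · rw [h] at hlt; exact absurd hlt (lt_irrefl _)
      · exact absurd (dag_strictAnti h) (asymm hlt)
    exact (RelEmbedding.natGT (fun n => (β n).1) hdesc).not_wellFounded
      Ordinal.lt_wf
  · intro g
    apply Set.Subsingleton.finite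
    intro β hβ γ hγ
    simp only [Set.mem_setOf_eq, term_coeff] at hβ hγ
    by_cases h1 : g = monExp α (dagExp α β.1)
    · by_cases h2 : g = monExp α (dagExp α γ.1)
      · exact dag_inj (h1.symm.trans h2)
      · simp [h2] at hγ
    · simp [h1] at hβ
lemma mdag_coeff (r : Idx α → ℝ) (g : (Mon α)ᵒᵈ) :
    (mdag α r).coeff g =
      if h : ∃ β : Idx α, g = monExp α (dagExp α β.1) then r h.choose else 0 := by
  rw [mdag, famSum, dif_pos (summable_dag r)]
  rw [HahnSeries.SummableFamily.coeff_hsum]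
  simp only [show ∀ i, ((⟨fun β : Idx α => r β • monS α (dagExp α β.1), wellBased_isPWO (summable_dag r).1, (summable_dag r).2⟩ : HahnSeries.SummableFamily (Mon α)ᵒᵈ ℝ (Idx α)) i) = r i • monS α (dagExp α i.1) from fun _ => rfl]
  split
  · next h =>
    rw [finsum_eq_single _ h.choose]
    · rw [term_coeff, if_pos h.choose_spec]
    · intro x hx
      rw [term_coeff]
      rw [if_neg]
      intro hg
      exact hx (dag_inj ((h.choose_spec.symm.trans hg).symm))
  · next h =>
    apply finsum_eq_zero_of_forall_eq_zero
    intro x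
    rw [term_coeff, if_neg (fun hg => h ⟨x, hg⟩)]

lemma mdag_coeff_dag (r : Idx α → ℝ) (β : Idx α) :
    (mdag α r).coeff (monExp α (dagExp α β.1)) = r β := by
  have h : ∃ γ : Idx α, monExp α (dagExp α β.1) = monExp α (dagExp α γ.1) := ⟨β, rfl⟩
  rw [mdag_coeff, dif_pos h, dag_inj h.choose_spec.symm]

lemma mdag_coeff_of_ne (r : Idx α → ℝ) (g : (Mon α)ᵒᵈ)
    (h : ∀ β : Idx α, g ≠ monExp α (dagExp α β.1)) : (mdag α r).coeff g = 0 := by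
  rw [mdag_coeff, dif_neg (fun ⟨β, hβ⟩ => h β hβ)]

lemma mdag_support (r : Idx α → ℝ) :
    (mdag α r).support ⊆ Set.range fun β : Idx α => monExp α (dagExp α β.1) := by
  intro g hg
  by_contra hc
  rw [Set.mem_range] at hc
  push_neg at hc
  exact hg (mdag_coeff_of_ne r g (fun β h => hc β h.symm))

lemma mdag_add (r s : Idx α → ℝ) : mdag α (r + s) = mdag α r + mdag α s := by
  ext g
  rw [HahnSeries.coeff_add, mdag_coeff, mdag_coeff, mdag_coeff]
  split <;> simp [Pi.add_apply]

lemma mdag_smul (t : ℝ) (r : Idx α → ℝ) : mdag α (t • r) = t • mdag α r := by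
  ext g
  rw [HahnSeries.coeff_smul, mdag_coeff, mdag_coeff]
  split <;> simp

lemma mdag_zero : mdag α (0 : Idx α → ℝ) = 0 := by
  ext g
  rw [mdag_coeff]
  split <;> simp

lemma monS_mul (r s : Idx α → ℝ) : monS α r * monS α s = monS α (r + s) := by
  rw [monS, monS, monS, HahnSeries.single_mul_single, one_mul, monExp_add]

lemma mder_add (r s : Idx α → ℝ) :
    mder α (r + s) = mder α r * monS α s + monS α r * mder α s := by
  rw [mder, mder, mder, mdag_add, ← monS_mul]
  ring

lemma mder_zero : mder α (0 : Idx α → ℝ) = 0 := by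
  rw [mder, mdag_zero, mul_zero]

lemma mdag_ne_zero {r : Idx α → ℝ} (hr : r ≠ 0) : mdag α r ≠ 0 := by
  obtain ⟨β, hβ⟩ := Function.ne_iff.mp hr
  intro h
  apply hβ
  have := mdag_coeff_dag r β
  rw [h, HahnSeries.coeff_zero] at this
  simp [← this]

lemma monS_ne_zero (r : Idx α → ℝ) : monS α r ≠ 0 :=
  HahnSeries.single_ne_zero one_ne_zero

lemma mder_ne_zero {r : Idx α → ℝ} (hr : r ≠ 0) : mder α r ≠ 0 :=
  mul_ne_zero (monS_ne_zero r) (mdag_ne_zero hr)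
lemma mder_coeff (r : Idx α → ℝ) (β : Idx α) :
    (mder α r).coeff (monExp α (dagExp α β.1 + r)) = r β := by
  have h : monExp α (dagExp α β.1 + r) = monExp α (dagExp α β.1) + monExp α r := monExp_add _ _
  rw [mder, monS, h, HahnSeries.coeff_single_mul_add, one_mul, mdag_coeff_dag]

lemma mder_support (r : Idx α → ℝ) :
    (mder α r).support ⊆ Set.range fun β : Idx α => monExp α (dagExp α β.1 + r) := by
  intro g hg
  obtain ⟨x, hx, y, hy, rfl⟩ := HahnSeries.support_mul_subset hg
  obtain ⟨β, rfl⟩ := mdag_support r hy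
  have hx' : x = monExp α r := HahnSeries.support_single_subset hx
  refine ⟨β, ?_⟩
  show monExp α (dagExp α β.1 + r) = x + monExp α (dagExp α β.1)
  rw [monExp_add, hx', add_comm]

lemma mem_support_mder {r : Idx α → ℝ} {g : (Mon α)ᵒᵈ} (hg : g ∈ (mder α r).support) :
    ∃ β : Idx α, g = monExp α (dagExp α β.1 + r) ∧ r β ≠ 0 := by
  obtain ⟨β, rfl⟩ := mder_support r hg
  exact ⟨β, rfl, by rw [HahnSeries.mem_support, mder_coeff] at hg; exact hg⟩

lemma succ_le_of_lt'' {a b : Ordinal} (h : a < b) : a + 1 ≤ b := by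
  rw [Ordinal.add_one_eq_succ, Order.succ_le_iff]; exact h

lemma le_of_lt_succ'' {a b : Ordinal} (h : a < b + 1) : a ≤ b := by
  rwa [Ordinal.add_one_eq_succ, Order.lt_succ_iff] at h

lemma exists_min {s : Idx α → ℝ} (hs : s ≠ 0) :
    ∃ ν : Idx α, s ν ≠ 0 ∧ ∀ j, j < ν → s j = 0 := by
  obtain ⟨x, hx⟩ := Function.ne_iff.mp hs
  have hx' : s x ≠ 0 := by simpa using hx
  set T : Set Ordinal.{0} := {o : Ordinal | ∃ h : o < α, s ⟨o, h⟩ ≠ 0} with hT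
  have hne : T.Nonempty := ⟨x.1, x.2, by simpa using hx'⟩
  obtain ⟨hlt, hmem⟩ := csInf_mem hne
  refine ⟨⟨sInf T, hlt⟩, hmem, fun j hj => ?_⟩
  by_contra hc
  have : sInf T ≤ j.1 := csInf_le' (show j.1 ∈ T from ⟨j.2, by simpa using hc⟩)
  have hj' : j.1 < sInf T := hj
  exact absurd hj' (not_lt.mpr this)

lemma lt_dag_core (r : Idx α → ℝ) (μ β ν : Idx α) (hμ0 : ∀ j, j < μ → r j = 0)
    (hμ : r μ < 0) (hβ : r β ≠ 0) :
    (toLex (dagExp α β.1 + r) : Mon α) < toLex (dagExp α ν.1) := by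
  have hμβ : μ ≤ β := le_of_not_gt fun h => hβ (hμ0 β h)
  rcases le_or_gt μ ν with hc | hc
  · refine lex_lt_of_witness _ _ μ (fun j hj => ?_) ?_
    · have hjβ : j.1 ≤ β.1 := le_of_lt (lt_of_lt_of_le hj hμβ)
      have hjν : j.1 ≤ ν.1 := le_of_lt (lt_of_lt_of_le hj hc)
      simp [dagExp, Pi.add_apply, hμ0 j hj, hjβ, hjν]
    · have h1 : μ.1 ≤ β.1 := hμβ
      have h2 : μ.1 ≤ ν.1 := hc
      simp only [dagExp, Pi.add_apply, if_pos h1, if_pos h2]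
      linarith
  · have hσα : ν.1 + 1 < α := lt_of_le_of_lt (succ_le_of_lt'' (lt_of_lt_of_le hc hμβ)) β.2
    set σ : Idx α := ⟨ν.1 + 1, hσα⟩ with hσ
    have hσμ : σ ≤ μ := succ_le_of_lt'' hc
    have hσβ : σ.1 ≤ β.1 := le_trans hσμ hμβ
    refine lex_lt_of_witness _ _ σ (fun j hj => ?_) ?_
    · have hjν : j.1 ≤ ν.1 := le_of_lt_succ'' hj
      have hjμ : j < μ := lt_of_le_of_lt (show j ≤ ν from hjν) hc
      have hjβ : j.1 ≤ β.1 := le_of_lt (lt_of_lt_of_le hjμ hμβ)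
      simp [dagExp, Pi.add_apply, hμ0 j hjμ, hjβ, hjν]
    · have hσν : ¬ σ.1 ≤ ν.1 := not_le.mpr (Order.lt_add_one_iff.mpr le_rfl)
      have hrσ : r σ ≤ 0 := by
        rcases lt_or_eq_of_le hσμ with h | h
        · exact le_of_eq (hμ0 σ h)
        · rw [h]; exact le_of_lt hμ
      simp only [dagExp, Pi.add_apply, if_pos hσβ, if_neg hσν]
      linarith

lemma lt_der_core (r s : Idx α → ℝ) (κ β ν : Idx α)
    (hκ0 : ∀ j, j < κ → r j = s j) (hκ : r κ < s κ)
    (hβ : r β ≠ 0) (hν0 : ∀ j, j < ν → s j = 0) :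
    (toLex (dagExp α β.1 + r) : Mon α) < toLex (dagExp α ν.1 + s) := by
  rcases le_or_gt κ ν with hc | hc
  · have hκβ : κ ≤ β := by
      by_contra h
      exact hβ (by rw [hκ0 β (lt_of_not_ge h), hν0 β (lt_of_lt_of_le (lt_of_not_ge h) hc)])
    refine lex_lt_of_witness _ _ κ (fun j hj => ?_) ?_
    · have hjβ : j.1 ≤ β.1 := le_of_lt (lt_of_lt_of_le hj hκβ)
      have hjν : j.1 ≤ ν.1 := le_of_lt (lt_of_lt_of_le hj hc)
      simp [dagExp, Pi.add_apply, hκ0 j hj, hjβ, hjν]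
    · have h1 : κ.1 ≤ β.1 := hκβ
      have h2 : κ.1 ≤ ν.1 := hc
      simp only [dagExp, Pi.add_apply, if_pos h1, if_pos h2]
      linarith
  · have hνβ : ν ≤ β := by
      by_contra h
      exact hβ (by rw [hκ0 β (lt_trans (lt_of_not_ge h) hc), hν0 β (lt_of_not_ge h)])
    rcases eq_or_lt_of_le hνβ with hβν | hβν
    · refine lex_lt_of_witness _ _ κ (fun j hj => ?_) ?_
      · simp [dagExp, Pi.add_apply, ← hβν, hκ0 j hj]
      · simp only [dagExp, Pi.add_apply, ← hβν]
        split <;> linarith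
    · have hσα : ν.1 + 1 < α := lt_of_le_of_lt (succ_le_of_lt'' hβν) β.2
      set σ : Idx α := ⟨ν.1 + 1, hσα⟩ with hσ
      have hσβ : σ.1 ≤ β.1 := succ_le_of_lt'' hβν
      have hσκ : σ ≤ κ := succ_le_of_lt'' hc
      refine lex_lt_of_witness _ _ σ (fun j hj => ?_) ?_
      · have hjν : j.1 ≤ ν.1 := le_of_lt_succ'' hj
        have hjκ : j < κ := lt_of_le_of_lt (show j ≤ ν from hjν) hc
        have hjβ : j.1 ≤ β.1 := le_of_lt (lt_of_le_of_lt (show j ≤ ν from hjν) hβν)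
        simp [dagExp, Pi.add_apply, hκ0 j hjκ, hjβ, hjν]
      · have hσν : ¬ σ.1 ≤ ν.1 := not_le.mpr (Order.lt_add_one_iff.mpr le_rfl)
        have hrσ : r σ ≤ s σ := by
          rcases lt_or_eq_of_le hσκ with h | h
          · exact le_of_eq (hκ0 σ h)
          · rw [h]; exact le_of_lt hκ
        simp only [dagExp, Pi.add_apply, if_pos hσβ, if_neg hσν]
        linarith

lemma prec_zero {g : LSeries α} (hg : g ≠ 0) : prec 0 g :=
  ⟨hg, fun m hm => by simp [HahnSeries.support_zero] at hm⟩
lemma mem_support_monS (r : Idx α → ℝ) : monExp α r ∈ (monS α r).support := by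
  rw [HahnSeries.mem_support, monS, HahnSeries.coeff_single_same]
  exact one_ne_zero

lemma part4 (r s : Idx α → ℝ) (h : prec (monS α r) 1) (hs : s ≠ 0) :
    prec (mder α r) (mdag α s) := by
  by_cases hr : r = 0
  · subst hr; rw [mder_zero]; exact prec_zero (mdag_ne_zero hs)
  refine ⟨mdag_ne_zero hs, fun m hm => ?_⟩
  obtain ⟨n, hn, hlt⟩ := h.2 _ (mem_support_monS r)
  rw [HahnSeries.support_one, Set.mem_singleton_iff] at hn
  subst hn
  have hr0 : (toLex r : Mon α) < toLex 0 := hlt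
  obtain ⟨μ, hμ0, hμ⟩ := lex_lt_elim hr0
  obtain ⟨ν, hν, hν0⟩ := exists_min hs
  obtain ⟨β, rfl, hβ⟩ := mem_support_mder hm
  refine ⟨monExp α (dagExp α ν.1), ?_, ?_⟩
  · rw [HahnSeries.mem_support, mdag_coeff_dag]; exact hν
  · exact lt_dag_core r μ β ν (fun j hj => by simpa using hμ0 j hj) (by simpa using hμ) hβ

lemma part5 (r s : Idx α → ℝ) (h : prec (monS α r) (monS α s)) (hs : s ≠ 0) :
    prec (mder α r) (mder α s) := by
  by_cases hr : r = 0
  · subst hr; rw [mder_zero]; exact prec_zero (mder_ne_zero hs)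
  refine ⟨mder_ne_zero hs, fun m hm => ?_⟩
  obtain ⟨n, hn, hlt⟩ := h.2 _ (mem_support_monS r)
  have hn' : n = monExp α s := HahnSeries.support_single_subset hn
  rw [hn'] at hlt
  have hrs : (toLex r : Mon α) < toLex s := hlt
  obtain ⟨κ, hκ0, hκ⟩ := lex_lt_elim hrs
  obtain ⟨ν, hν, hν0⟩ := exists_min hs
  obtain ⟨β, rfl, hβ⟩ := mem_support_mder hm
  refine ⟨monExp α (dagExp α ν.1 + s), ?_, ?_⟩
  · rw [HahnSeries.mem_support, mder_coeff]; exact hν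
  · exact lt_der_core r s κ β ν hκ0 hκ hβ hν0


/-- Basic properties of `m ↦ m†` and `m ↦ m'` on monomials `m = ℓ^r`:
the defining family is summable; (i) `(mn)† = m† + n†`, `(mᵗ)† = t·m†`;
(ii) `(mn)' = m'·n + m·n'`; (iii) `m ≠ 1 → m' ≠ 0 ∧ m† ≠ 0`;
(iv) `m ≺ 1, n ≠ 1 → m' ≺ n†`; (v) `m ≺ n, n ≠ 1 → m' ≺ n'`;
(vi) `supp m' ⊆ {ℓ_β† : β < α}·m`. -/
theorem statement8 (α : Ordinal.{0}) :
    (∀ r : Idx α → ℝ, IsSummable fun β : Idx α => r β • monS α (dagExp α β.1)) ∧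
    (∀ r s : Idx α → ℝ, mdag α (r + s) = mdag α r + mdag α s) ∧
    (∀ (t : ℝ) (r : Idx α → ℝ), mdag α (t • r) = t • mdag α r) ∧
    (∀ r s : Idx α → ℝ, mder α (r + s) = mder α r * monS α s + monS α r * mder α s) ∧
    (∀ r : Idx α → ℝ, r ≠ 0 → mder α r ≠ 0 ∧ mdag α r ≠ 0) ∧
    (∀ r s : Idx α → ℝ, prec (monS α r) 1 → s ≠ 0 → prec (mder α r) (mdag α s)) ∧
    (∀ r s : Idx α → ℝ, prec (monS α r) (monS α s) → s ≠ 0 →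
      prec (mder α r) (mder α s)) ∧
    (∀ r : Idx α → ℝ, (mder α r).support ⊆
      Set.range fun β : Idx α => monExp α (dagExp α β.1 + r)) := by
  exact ⟨fun r => summable_dag r, fun r s => mdag_add r s, fun t r => mdag_smul t r,
    fun r s => mder_add r s, fun r hr => ⟨mder_ne_zero hr, mdag_ne_zero hr⟩,
    part4, part5, fun r => mder_support r⟩

end LogHyp
end
end
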